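/- arXiv:1407.1543 — 6 statements merged into one kernel-verified Lean document; each statement's English description precedes it below -/
import Mathlib

section
/- Let A be a σ-dictionary with columns a¹,…,a^m ∈ ℝⁿ, let d ≥ 4 be even, let k be a positive integer multiple of d−2, and let δ > 0. Let L be a degree-3k pseudoexpectation on ℝ[u₁,…,u_n] that satisfies the constraints {‖u‖₂² = 1} and {‖Aᵀu‖_d^d ≥ e^{−δd}}. Then there exists a column c ∈ {a¹,…,a^m} such that L(⟨c,u⟩^k) ≥ e^{−δ'k}/m, where δ' = (d/(d−2))·δ + (ln σ)/(d−2). In particular L(⟨c,u⟩^k) ≥ e^{−εk} for ε = (d/(d−2))δ + (ln σ)/(d−2) + (ln m)/k. -/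
open MvPolynomial

/-- A polynomial is a sum of squares if it is a finite sum of squares of polynomials. -/
def IsSOS {σ : Type*} (p : MvPolynomial σ ℝ) : Prop :=
  ∃ (r : ℕ) (q : Fin r → MvPolynomial σ ℝ), p = ∑ i, q i ^ 2

/-- A degree-`k` pseudoexpectation on `ℝ[u₁,…,u_n]`: a linear functional with `L 1 = 1`
and `L (P²) ≥ 0` whenever `deg (P²) ≤ k`. -/
def IsPseudoExpectation (n k : ℕ) (L : MvPolynomial (Fin n) ℝ → ℝ) : Prop :=
  (∀ P Q : MvPolynomial (Fin n) ℝ, L (P + Q) = L P + L Q) ∧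
  (∀ (c : ℝ) (P : MvPolynomial (Fin n) ℝ), L (c • P) = c * L P) ∧
  L 1 = 1 ∧
  ∀ P : MvPolynomial (Fin n) ℝ, (P ^ 2).totalDegree ≤ k → 0 ≤ L (P ^ 2)

/-- `L` satisfies the constraint `{P = 0}`: `L (P·Q) = 0` for every `Q` with
`deg (P·Q) ≤ k`. -/
def SatisfiesZero (n k : ℕ) (L : MvPolynomial (Fin n) ℝ → ℝ)
    (P : MvPolynomial (Fin n) ℝ) : Prop :=
  ∀ Q : MvPolynomial (Fin n) ℝ, (P * Q).totalDegree ≤ k → L (P * Q) = 0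

/-- `L` satisfies the constraint `{P ≥ 0}`: `L` satisfies `{P - S = 0}` for some
sum-of-squares polynomial `S` (of degree at most `k`). -/
def SatisfiesNonneg (n k : ℕ) (L : MvPolynomial (Fin n) ℝ → ℝ)
    (P : MvPolynomial (Fin n) ℝ) : Prop :=
  ∃ S : MvPolynomial (Fin n) ℝ, IsSOS S ∧ S.totalDegree ≤ k ∧ SatisfiesZero n k L (P - S)

open Matrix

set_option maxHeartbeats 2000000

lemma hc_rep {n : ℕ} (q : MvPolynomial (Fin n) ℝ) (D : ℕ) (hq : q.totalDegree ≤ D) :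
    q = ∑ c ∈ Finset.range (D+1), homogeneousComponent c q := by
  classical
  conv_lhs => rw [← sum_homogeneousComponent q]
  refine Finset.sum_subset (Finset.range_subset_range.2 (by omega)) (fun c _ hc => ?_)
  simp only [Finset.mem_range, not_lt] at hc
  exact homogeneousComponent_eq_zero c q (by omega)

lemma hc_sq {n : ℕ} (q : MvPolynomial (Fin n) ℝ) (D : ℕ) (hq : q.totalDegree ≤ D) :
    homogeneousComponent (2*D) (q^2) = (homogeneousComponent D q)^2 := by
  classical
  conv_lhs => rw [hc_rep q D hq]
  rw [sq, Finset.sum_mul_sum]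
  simp only [map_sum]
  have key : ∀ c ∈ Finset.range (D+1), ∀ c' ∈ Finset.range (D+1),
      homogeneousComponent (2*D) (homogeneousComponent c q * homogeneousComponent c' q)
      = if c = D ∧ c' = D then homogeneousComponent D q * homogeneousComponent D q else 0 := by
    intro c hc c' hc'
    simp only [Finset.mem_range] at hc hc'
    have hmul : (homogeneousComponent c q * homogeneousComponent c' q).IsHomogeneous (c + c') :=
      (homogeneousComponent_isHomogeneous c q).mul (homogeneousComponent_isHomogeneous c' q)
    rw [homogeneousComponent_of_mem ((mem_homogeneousSubmodule _ _).2 hmul)]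
    by_cases h : c = D ∧ c' = D
    · obtain ⟨rfl, rfl⟩ := h
      rw [if_pos (by omega), if_pos ⟨rfl, rfl⟩]
    · rw [if_neg (show ¬(2*D = c + c') by omega), if_neg h]
  rw [Finset.sum_congr rfl (fun c hc => Finset.sum_congr rfl (fun c' hc' => key c hc c' hc'))]
  simp [Finset.sum_ite_eq', sq, ite_and]

lemma hc_top_ne_zero {n : ℕ} (p : MvPolynomial (Fin n) ℝ) (hp : p ≠ 0) :
    homogeneousComponent p.totalDegree p ≠ 0 := by
  classical
  obtain ⟨s, hs, hdeg⟩ := p.support.exists_mem_eq_sup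
    (Finset.nonempty_iff_ne_empty.mpr (mt MvPolynomial.support_eq_empty.mp hp)) (fun s => s.sum fun _ e => e)
  intro h0
  have hc : coeff s (homogeneousComponent p.totalDegree p) = coeff s p := by
    rw [coeff_homogeneousComponent]
    rw [if_pos]
    show (∑ i ∈ s.support, s i) = p.totalDegree
    rw [totalDegree, hdeg]
    rfl
  rw [h0] at hc
  exact (mem_support_iff.mp hs) (by simpa using hc.symm)

lemma sq_deg_le_sos {n r : ℕ} (q : Fin r → MvPolynomial (Fin n) ℝ) (i : Fin r) :
    ((q i)^2).totalDegree ≤ (∑ j, (q j)^2).totalDegree := by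
  classical
  set D := Finset.univ.sup (fun j => (q j).totalDegree) with hD
  have hqD : ∀ j, (q j).totalDegree ≤ D := fun j => Finset.le_sup (f := fun j => (q j).totalDegree) (Finset.mem_univ j)
  have hdi : ((q i)^2).totalDegree ≤ 2*D :=
    (totalDegree_pow _ _).trans (by have := hqD i; omega)
  rcases Nat.eq_zero_or_pos D with h0 | hDpos
  · exact le_trans hdi (by omega)
  · by_contra hlt
    push_neg at hlt
    have hSlt : (∑ j, (q j)^2).totalDegree < 2*D := lt_of_lt_of_le (by omega) hdi
    have hz : homogeneousComponent (2*D) (∑ j, (q j)^2) = 0 :=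
      homogeneousComponent_eq_zero _ _ hSlt
    rw [map_sum] at hz
    have hz2 : (∑ j, (homogeneousComponent D (q j))^2) = 0 := by
      rw [← hz]
      exact Finset.sum_congr rfl (fun j _ => (hc_sq (q j) D (hqD j)).symm)
    have : Nonempty (Fin r) := ⟨i⟩
    obtain ⟨j0, -, hj0⟩ := Finset.exists_mem_eq_sup Finset.univ
      (Finset.univ_nonempty) (fun j => (q j).totalDegree)
    rw [← hD] at hj0
    have hqj0 : q j0 ≠ 0 := by
      intro h
      rw [h] at hj0
      rw [totalDegree_zero] at hj0
      omega
    have hcne : homogeneousComponent D (q j0) ≠ 0 := by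
      have := hc_top_ne_zero (q j0) hqj0
      rwa [← hj0] at this
    apply hcne
    apply MvPolynomial.funext
    intro x
    have hx : ∑ j, (eval x (homogeneousComponent D (q j)))^2 = (0:ℝ) := by
      have := congrArg (eval x) hz2
      simpa [map_sum] using this
    have := (Finset.sum_eq_zero_iff_of_nonneg (fun j _ => sq_nonneg _)).mp hx j0 (Finset.mem_univ j0)
    simpa using pow_eq_zero_iff (n := 2) (by norm_num) |>.mp this

section Lin
variable {n N : ℕ} {L : MvPolynomial (Fin n) ℝ → ℝ}

lemma Lsum (hsmul : ∀ (c:ℝ) P, L (c • P) = c * L P)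
    (hadd : ∀ P Q, L (P + Q) = L P + L Q)
    {ι : Type*} (s : Finset ι) (f : ι → MvPolynomial (Fin n) ℝ) :
    L (∑ i ∈ s, f i) = ∑ i ∈ s, L (f i) := by
  classical
  have Lzero : L 0 = 0 := by simpa using hsmul 0 0
  induction s using Finset.induction_on with
  | empty => simpa using Lzero
  | insert _ _ hx ih => rw [Finset.sum_insert hx, Finset.sum_insert hx, hadd, ih]

lemma Lsub (hsmul : ∀ (c:ℝ) P, L (c • P) = c * L P)
    (hadd : ∀ P Q, L (P + Q) = L P + L Q) (P Q : MvPolynomial (Fin n) ℝ) :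
    L (P - Q) = L P - L Q := by
  have h1 : P - Q = P + (-1:ℝ) • Q := by rw [neg_one_smul]; ring
  rw [h1, hadd, hsmul]; ring

lemma LCmul (hsmul : ∀ (c:ℝ) P, L (c • P) = c * L P)
    (c : ℝ) (P : MvPolynomial (Fin n) ℝ) : L (C c * P) = c * L P := by
  rw [← smul_eq_C_mul]; exact hsmul c P

lemma LC (hsmul : ∀ (c:ℝ) P, L (c • P) = c * L P) (hone : L 1 = 1) (c : ℝ) :
    L (C c) = c := by
  have := LCmul hsmul c 1
  rw [mul_one] at this
  rw [this, hone, mul_one]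

lemma pseudo_cs (hsmul : ∀ (c:ℝ) P, L (c • P) = c * L P)
    (hadd : ∀ P Q, L (P + Q) = L P + L Q)
    (hsq : ∀ P : MvPolynomial (Fin n) ℝ, (P^2).totalDegree ≤ N → 0 ≤ L (P^2))
    {m : ℕ} (f g : Fin m → MvPolynomial (Fin n) ℝ) (q : ℕ)
    (hdf : ∀ i, (f i).totalDegree ≤ q) (hdg : ∀ i, (g i).totalDegree ≤ q) (hq : 2*q ≤ N) :
    (∑ i, L (f i * g i))^2 ≤ (∑ i, L (f i ^2)) * (∑ i, L (g i ^2)) := by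
  have key : ∀ x : ℝ, 0 ≤ (∑ i, L (f i^2)) * (x*x) + (2*∑ i, L (f i * g i))*x + (∑ i, L (g i^2)) := by
    intro x
    have expand : ∀ i : Fin m,
        L ((C x * f i + g i)^2) = L (f i^2)*(x*x) + (2*L (f i * g i))*x + L (g i ^2) := by
      intro i
      have hid : (C x * f i + g i)^2
          = C (x*x) * (f i^2) + C (2*x) * (f i * g i) + g i ^2 := by
        rw [_root_.map_mul, show ((2:ℝ)*x) = x + x by ring, _root_.map_add]
        ring
      rw [hid, hadd, hadd, LCmul hsmul, LCmul hsmul]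
      ring
    have hdeg : ∀ i : Fin m, (((C x * f i + g i))^2).totalDegree ≤ N := by
      intro i
      refine le_trans (totalDegree_pow _ _) ?_
      have h1 : (C x * f i + g i).totalDegree ≤ q := by
        refine le_trans (totalDegree_add _ _) (max_le ?_ (hdg i))
        refine le_trans (totalDegree_mul _ _) ?_
        simp [totalDegree_C, hdf i]
      omega
    calc (0:ℝ) ≤ ∑ i, L ((C x * f i + g i)^2) :=
          Finset.sum_nonneg (fun i _ => hsq _ (hdeg i))
      _ = ∑ i, (L (f i^2)*(x*x) + (2*L (f i * g i))*x + L (g i ^2)) :=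
          Finset.sum_congr rfl (fun i _ => expand i)
      _ = (∑ i, L (f i^2)) * (x*x) + (2*∑ i, L (f i * g i))*x + (∑ i, L (g i^2)) := by
          simp [Finset.sum_add_distrib, Finset.sum_mul, Finset.mul_sum]
  have hd := discrim_le_zero key
  rw [discrim] at hd
  nlinarith [hd]

end Lin

lemma quad_expand {m n : ℕ} (B : Matrix (Fin m) (Fin n) ℝ) :
    ∑ i, (∑ j, C (B i j) * X j : MvPolynomial (Fin n) ℝ)^2
      = ∑ j : Fin n, ∑ l : Fin n, C ((Bᵀ * B) j l) * (X j * X l) := by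
  have h1 : ∀ i, (∑ j, C (B i j) * X j : MvPolynomial (Fin n) ℝ)^2
      = ∑ j : Fin n, ∑ l : Fin n, C (B i j * B i l) * (X j * X l) := by
    intro i
    rw [sq, Finset.sum_mul_sum]
    refine Finset.sum_congr rfl (fun j _ => Finset.sum_congr rfl (fun l _ => ?_))
    rw [_root_.map_mul]
    ring
  calc ∑ i, (∑ j, C (B i j) * X j : MvPolynomial (Fin n) ℝ)^2
      = ∑ i, ∑ j : Fin n, ∑ l : Fin n, C (B i j * B i l) * (X j * X l) :=
        Finset.sum_congr rfl (fun i _ => h1 i)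
    _ = ∑ j : Fin n, ∑ i, ∑ l : Fin n, C (B i j * B i l) * (X j * X l) := Finset.sum_comm
    _ = ∑ j : Fin n, ∑ l : Fin n, ∑ i, C (B i j * B i l) * (X j * X l) :=
        Finset.sum_congr rfl (fun j _ => Finset.sum_comm)
    _ = ∑ j : Fin n, ∑ l : Fin n, C ((Bᵀ * B) j l) * (X j * X l) := by
        refine Finset.sum_congr rfl (fun j _ => Finset.sum_congr rfl (fun l _ => ?_))
        rw [Matrix.mul_apply, map_sum, Finset.sum_mul]
        simp [Matrix.transpose_apply]

lemma sigma_sos {m n : ℕ} (σ : ℝ) (a : Fin m → Fin n → ℝ)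
    (hdict : ∀ u : Fin n → ℝ, ∑ i, (∑ j, a i j * u j) ^ 2 ≤ σ * ∑ j, u j ^ 2) :
    ∃ (B : Matrix (Fin n) (Fin n) ℝ),
      C σ * (∑ j, X j^2) - ∑ i, (∑ j, C (a i j) * X j : MvPolynomial (Fin n) ℝ)^2
        = ∑ i, (∑ j, C (B i j) * X j : MvPolynomial (Fin n) ℝ)^2 := by
  classical
  set A : Matrix (Fin m) (Fin n) ℝ := a with hA
  set M : Matrix (Fin n) (Fin n) ℝ := σ • (1 : Matrix (Fin n) (Fin n) ℝ) - Aᵀ * A with hM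
  have hpsd : M.PosSemidef := by
    refine Matrix.posSemidef_iff_dotProduct_mulVec.mpr ⟨?_, ?_⟩
    · ext j l
      simp [hM, Matrix.conjTranspose_apply, Matrix.sub_apply, Matrix.smul_apply,
        Matrix.one_apply, Matrix.mul_apply, Matrix.transpose_apply, eq_comm, mul_comm]
    · intro x
      have hst : star x = x := by
        funext j; simp
      rw [hst]
      have h1 : M *ᵥ x = σ • x - Aᵀ *ᵥ (A *ᵥ x) := by
        rw [hM, Matrix.sub_mulVec, Matrix.mulVec_mulVec]
        congr 1
        · rw [Matrix.smul_mulVec, Matrix.one_mulVec]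
      rw [h1, dotProduct_sub, dotProduct_smul, Matrix.dotProduct_mulVec,
        Matrix.vecMul_transpose]
      have h2 : (A *ᵥ x) ⬝ᵥ (A *ᵥ x) = ∑ i, (∑ j, A i j * x j)^2 := by
        simp [dotProduct, Matrix.mulVec, sq]
      have h3 : x ⬝ᵥ x = ∑ j, x j ^2 := by simp [dotProduct, sq]
      rw [h2]
      have := hdict x
      simp only [smul_eq_mul, h3]
      linarith [this]
  obtain ⟨B, hB⟩ : ∃ B : Matrix (Fin n) (Fin n) ℝ, M = Bᴴ * B := by
    open scoped MatrixOrder in exact CStarAlgebra.nonneg_iff_eq_star_mul_self.mp hpsd.nonneg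
  refine ⟨B, ?_⟩
  have hBt : Bᴴ * B = Bᵀ * B := by
    ext j l
    simp [Matrix.mul_apply, Matrix.conjTranspose_apply, Matrix.transpose_apply]
  rw [quad_expand B, ← hBt, ← hB]
  rw [quad_expand A]
  have hdiag : ∑ j : Fin n, ∑ l : Fin n,
      C ((σ • (1 : Matrix (Fin n) (Fin n) ℝ)) j l) * (X j * X l)
      = C σ * (∑ j, X j^2 : MvPolynomial (Fin n) ℝ) := by
    rw [Finset.mul_sum]
    refine Finset.sum_congr rfl (fun j _ => ?_)
    rw [Finset.sum_eq_single j]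
    · simp [Matrix.smul_apply, Matrix.one_apply, sq]
    · intro l _ hl
      simp [Matrix.smul_apply, Matrix.one_apply, Ne.symm hl]
    · simp
  have hsplit : ∀ j l : Fin n, C (M j l) * (X j * X l : MvPolynomial (Fin n) ℝ)
      = C ((σ • (1 : Matrix (Fin n) (Fin n) ℝ)) j l) * (X j * X l)
        - C ((Aᵀ * A) j l) * (X j * X l) := by
    intro j l
    rw [hM, Matrix.sub_apply, map_sub]
    ring
  rw [Finset.sum_congr rfl (fun j _ => Finset.sum_congr rfl (fun l _ => hsplit j l))]
  simp only [Finset.sum_sub_distrib]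
  rw [hdiag]

lemma deg_lin {n : ℕ} (w : Fin n → ℝ) :
    (∑ j, C (w j) * X j : MvPolynomial (Fin n) ℝ).totalDegree ≤ 1 := by
  refine totalDegree_finsetSum_le (fun j _ => ?_)
  refine le_trans (totalDegree_mul _ _) ?_
  simp [totalDegree_C, totalDegree_X]

lemma deg_neg {n : ℕ} (p : MvPolynomial (Fin n) ℝ) : (-p).totalDegree ≤ p.totalDegree := by
  rw [show -p = (-1:ℝ) • p by simp]
  exact totalDegree_smul_le _ _

lemma deg_sub {n : ℕ} (p q : MvPolynomial (Fin n) ℝ) :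
    (p - q).totalDegree ≤ max p.totalDegree q.totalDegree := by
  rw [sub_eq_add_neg]
  exact le_trans (totalDegree_add _ _) (max_le_max le_rfl (deg_neg q))

lemma lagrange {n : ℕ} (w : Fin n → ℝ) (hw : ∑ j, w j^2 = 1) :
    ∑ j : Fin n, ∑ l : Fin n,
        (C (w j) * X l - C (w l) * X j : MvPolynomial (Fin n) ℝ)^2
      = C 2 * ((∑ j, X j^2) - (∑ j, C (w j) * X j)^2) := by
  have expand : ∀ j l : Fin n, (C (w j) * X l - C (w l) * X j : MvPolynomial (Fin n) ℝ)^2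
      = C (w j * w j) * X l^2 + C (w l * w l) * X j^2
        - C 2 * ((C (w j) * X j) * (C (w l) * X l)) := by
    intro j l
    rw [_root_.map_mul, _root_.map_mul (f := (C : ℝ →+* MvPolynomial (Fin n) ℝ)) (w l)]
    rw [show ((2:ℝ)) = 1 + 1 by norm_num, _root_.map_add, _root_.map_one]
    ring
  rw [Finset.sum_congr rfl (fun j _ => Finset.sum_congr rfl (fun l _ => expand j l))]
  have hC1 : (∑ j, C (w j * w j) : MvPolynomial (Fin n) ℝ) = 1 := by
    rw [← map_sum]
    rw [show (∑ j, w j * w j) = ∑ j, w j ^2 by simp [sq]]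
    rw [hw, _root_.map_one]
  have h1 : ∑ j : Fin n, ∑ l : Fin n, (C (w j * w j) * X l^2 : MvPolynomial (Fin n) ℝ)
      = ∑ l : Fin n, (X l^2 : MvPolynomial (Fin n) ℝ) := by
    rw [← Finset.sum_mul_sum, hC1, one_mul]
  have h2 : ∑ j : Fin n, ∑ l : Fin n, (C (w l * w l) * X j^2 : MvPolynomial (Fin n) ℝ)
      = ∑ j : Fin n, (X j^2 : MvPolynomial (Fin n) ℝ) := by
    rw [Finset.sum_comm, ← Finset.sum_mul_sum, hC1, one_mul]
  simp only [Finset.sum_sub_distrib, Finset.sum_add_distrib]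
  rw [h1, h2]
  have h3 : ∑ j : Fin n, ∑ l : Fin n,
      (C 2 : MvPolynomial (Fin n) ℝ) * ((C (w j) * X j) * (C (w l) * X l))
      = C 2 * ((∑ j, C (w j) * X j) * (∑ l, C (w l) * X l)) := by
    simp only [← Finset.mul_sum]
    rw [← Finset.sum_mul]
  rw [h3]
  have hC2 : (C 2 : MvPolynomial (Fin n) ℝ) = 2 := by
    simp only [map_ofNat]
  rw [hC2]
  ring

lemma step_id {n : ℕ} (w : Fin n → ℝ) (hw : ∑ j, w j^2 = 1) (h : ℕ) :
    C (1/2 : ℝ) * ∑ j : Fin n, ∑ l : Fin n,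
        ((∑ j, C (w j) * X j)^h * (C (w j) * X l - C (w l) * X j) : MvPolynomial (Fin n) ℝ)^2
      = (∑ j, C (w j) * X j : MvPolynomial (Fin n) ℝ)^(2*h)
          * ((∑ j, X j^2) - (∑ j, C (w j) * X j)^2) := by
  have hterm : ∀ j l : Fin n,
      ((∑ j, C (w j) * X j)^h * (C (w j) * X l - C (w l) * X j) : MvPolynomial (Fin n) ℝ)^2
      = (∑ j, C (w j) * X j : MvPolynomial (Fin n) ℝ)^(2*h)
          * (C (w j) * X l - C (w l) * X j)^2 := by
    intro j l
    rw [mul_pow, ← pow_mul, mul_comm h 2]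
  rw [Finset.sum_congr rfl (fun j _ => Finset.sum_congr rfl (fun l _ => hterm j l))]
  simp only [← Finset.mul_sum]
  rw [lagrange w hw]
  have hC12 : (C (1/2:ℝ) : MvPolynomial (Fin n) ℝ) * C 2 = 1 := by
    rw [← _root_.map_mul]
    norm_num
  linear_combination ((∑ j, C (w j) * X j : MvPolynomial (Fin n) ℝ)^(2*h)
      * ((∑ j, X j^2) - (∑ j, C (w j) * X j)^2)) * hC12

lemma step_down {n N : ℕ} {L : MvPolynomial (Fin n) ℝ → ℝ}
    (hsmul : ∀ (c:ℝ) P, L (c • P) = c * L P)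
    (hadd : ∀ P Q, L (P + Q) = L P + L Q)
    (hsq : ∀ P : MvPolynomial (Fin n) ℝ, (P^2).totalDegree ≤ N → 0 ≤ L (P^2))
    (hz : ∀ Q : MvPolynomial (Fin n) ℝ, (((∑ j, X j ^ 2) - 1) * Q).totalDegree ≤ N →
      L (((∑ j, X j ^ 2) - 1) * Q) = 0)
    (w : Fin n → ℝ) (hw : ∑ j, w j^2 = 1) (h : ℕ) (hN : 2*h+2 ≤ N) :
    L ((∑ j, C (w j) * X j : MvPolynomial (Fin n) ℝ)^(2*h+2))
      ≤ L ((∑ j, C (w j) * X j : MvPolynomial (Fin n) ℝ)^(2*h)) := by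
  set x : MvPolynomial (Fin n) ℝ := ∑ j, C (w j) * X j with hx
  have hdx : x.totalDegree ≤ 1 := deg_lin w
  have hdsum : (∑ j, X j^2 : MvPolynomial (Fin n) ℝ).totalDegree ≤ 2 :=
    totalDegree_finsetSum_le (fun j _ => by rw [totalDegree_X_pow])
  have hdsum1 : ((∑ j, X j^2 : MvPolynomial (Fin n) ℝ) - 1).totalDegree ≤ 2 :=
    le_trans (deg_sub _ _) (by simp [hdsum, totalDegree_one])
  have hdxp : ∀ s : ℕ, (x^s).totalDegree ≤ s := fun s =>
    le_trans (totalDegree_pow _ _) (by have := hdx; nlinarith)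
  have hq0 : L (((∑ j, X j^2) - 1) * x^(2*h)) = 0 := by
    refine hz _ (le_trans (totalDegree_mul _ _) ?_)
    have := hdxp (2*h)
    omega
  have e1 : L (x^(2*h) * (∑ j, X j^2)) = L (x^(2*h)) := by
    have hid : x^(2*h) * (∑ j, X j^2) = ((∑ j, X j^2) - 1) * x^(2*h) + x^(2*h) := by ring
    rw [hid, hadd, hq0, zero_add]
  have e2 : 0 ≤ L (x^(2*h) * ((∑ j, X j^2) - x^2)) := by
    rw [← step_id w hw h, LCmul hsmul, Lsum hsmul hadd]
    have hterm : ∀ j : Fin n, (0:ℝ) ≤ L (∑ l : Fin n,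
        ((∑ j, C (w j) * X j)^h * (C (w j) * X l - C (w l) * X j))^2) := by
      intro j
      rw [Lsum hsmul hadd]
      refine Finset.sum_nonneg (fun l _ => ?_)
      refine hsq _ ?_
      refine le_trans (totalDegree_pow _ _) ?_
      have hde : ((∑ j, C (w j) * X j : MvPolynomial (Fin n) ℝ)^h
          * (C (w j) * X l - C (w l) * X j)).totalDegree ≤ h + 1 := by
        refine le_trans (totalDegree_mul _ _) ?_
        have h1 : (C (w j) * X l - C (w l) * X j : MvPolynomial (Fin n) ℝ).totalDegree ≤ 1 := by
          refine le_trans (deg_sub _ _) ?_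
          refine max_le ?_ ?_ <;>
            exact le_trans (totalDegree_mul _ _) (by simp [totalDegree_C, totalDegree_X])
        have h2 : ((∑ j, C (w j) * X j : MvPolynomial (Fin n) ℝ)^h).totalDegree ≤ h :=
          le_trans (totalDegree_pow _ _) (by
            have := deg_lin w
            nlinarith)
        omega
      omega
    have hsums : (0:ℝ) ≤ ∑ j : Fin n, L (∑ l : Fin n,
        ((∑ j, C (w j) * X j)^h * (C (w j) * X l - C (w l) * X j))^2) :=
      Finset.sum_nonneg (fun j _ => hterm j)
    nlinarith
  have e3 : L (x^(2*h+2)) = L (x^(2*h) * (∑ j, X j^2)) - L (x^(2*h) * ((∑ j, X j^2) - x^2)) := by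
    rw [← Lsub hsmul hadd]
    congr 1
    ring
  rw [e3, e1]
  linarith

/-- Main lemma for tensor decomposition: if `L` is a degree-`3k` pseudoexpectation
satisfying `{‖u‖₂² = 1}` and `{‖Aᵀu‖_d^d ≥ e^{-δd}}` for a `σ`-dictionary `A`, then some
column `c` of `A` has `L ⟨c,u⟩^k ≥ e^{-δ'k}/m ≥ e^{-εk}` with
`δ' = (d/(d-2))δ + (log σ)/(d-2)` and `ε = δ' + (log m)/k`. -/
theorem stmt14 (n m : ℕ) (hm : 0 < m) (σ : ℝ) (hσ : 1 ≤ σ)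
    (a : Fin m → Fin n → ℝ)
    (hunit : ∀ i, ∑ j, a i j ^ 2 = 1)
    (hdict : ∀ u : Fin n → ℝ, ∑ i, (∑ j, a i j * u j) ^ 2 ≤ σ * ∑ j, u j ^ 2)
    (d : ℕ) (hd4 : 4 ≤ d) (hde : Even d)
    (k : ℕ) (hk : 0 < k) (hdvd : (d - 2) ∣ k)
    (δ : ℝ) (hδ : 0 < δ)
    (L : MvPolynomial (Fin n) ℝ → ℝ)
    (hL : IsPseudoExpectation n (3 * k) L)
    (hc1 : SatisfiesZero n (3 * k) L ((∑ j, X j ^ 2) - 1))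
    (hc2 : SatisfiesNonneg n (3 * k) L
      ((∑ i, (∑ j, C (a i j) * X j) ^ d) - C (Real.exp (-(δ * d))))) :
    ∃ i : Fin m,
      Real.exp (-(((d : ℝ) / ((d : ℝ) - 2) * δ + Real.log σ / ((d : ℝ) - 2)) * k)) / m ≤
        L ((∑ j, C (a i j) * X j) ^ k) ∧
      Real.exp (-(((d : ℝ) / ((d : ℝ) - 2) * δ + Real.log σ / ((d : ℝ) - 2) +
          Real.log m / k) * k)) ≤
        L ((∑ j, C (a i j) * X j) ^ k) := by
  classical
  obtain ⟨hadd, hsmul, hone, hsq⟩ := hL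
  obtain ⟨t, hk2⟩ := hdvd
  obtain ⟨c, hcd⟩ := hde
  have hps : d - 2 = 2*(c-1) := by omega
  have ht1 : 1 ≤ t := by
    rcases Nat.eq_zero_or_pos t with h | h
    · rw [h, mul_zero] at hk2; omega
    · exact h
  have hdk : d - 2 ≤ k := by
    calc d - 2 = (d-2)*1 := (mul_one _).symm
      _ ≤ (d-2)*t := Nat.mul_le_mul_left _ ht1
      _ = k := hk2.symm
  have hkd3 : k + d ≤ 3*k := by omega
  have hEs : ∀ s, s ≤ t+1 → s*(d-2)+2 ≤ k + d := by
    intro s hs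
    have h2 : s*(d-2) ≤ (t+1)*(d-2) := Nat.mul_le_mul_right _ hs
    have h3 : (t+1)*(d-2) = k + (d-2) := by rw [hk2]; ring
    omega
  set x : Fin m → MvPolynomial (Fin n) ℝ := fun i => ∑ j, C (a i j) * X j with hxd
  have hdeg1 : ∀ i, (x i).totalDegree ≤ 1 := fun i => deg_lin (a i)
  have hdxp : ∀ i (s:ℕ), ((x i)^s).totalDegree ≤ s := by
    intro i s
    refine le_trans (totalDegree_pow _ _) ?_
    calc s * (x i).totalDegree ≤ s * 1 := Nat.mul_le_mul_left _ (hdeg1 i)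
      _ = s := mul_one s
  set e : ℕ → ℝ := fun s => ∑ i, L ((x i)^(s*(d-2)+2)) with hed
  -- nonnegativity of e
  have hepos : ∀ s, s ≤ t+1 → 0 ≤ e s := by
    intro s hs
    refine Finset.sum_nonneg (fun i _ => ?_)
    have hex : (x i)^(s*(d-2)+2) = ((x i)^(s*(c-1)+1))^2 := by
      rw [← pow_mul, hps]; congr 1; ring
    rw [hex]
    refine hsq _ ?_
    refine le_trans (totalDegree_pow _ _) ?_
    have h1 := hdxp i (s*(c-1)+1)
    have h2 : 2*(s*(c-1)+1) = s*(d-2)+2 := by rw [hps]; ring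
    have h3 := hEs s hs
    linarith
  -- Cauchy-Schwarz chain inequality
  have hA : ∀ s0 : ℕ, s0 + 1 ≤ t → (e (s0+1))^2 ≤ e s0 * e (s0+2) := by
    intro s0 hst
    have hcs := pseudo_cs hsmul hadd hsq
      (fun i => (x i)^(s0*(c-1)+1)) (fun i => (x i)^((s0+2)*(c-1)+1))
      ((s0+2)*(c-1)+1)
      (fun i => le_trans (hdxp i _) (by
        have := Nat.mul_le_mul_right (c-1) (Nat.le_add_right s0 2)
        omega))
      (fun i => hdxp i _)
      (by
        have h2 : 2*((s0+2)*(c-1)+1) = (s0+2)*(d-2)+2 := by rw [hps]; ring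
        have h3 := hEs (s0+2) (by omega)
        linarith)
    have h1 : ∀ i : Fin m, (x i)^(s0*(c-1)+1) * (x i)^((s0+2)*(c-1)+1)
        = (x i)^((s0+1)*(d-2)+2) := by
      intro i
      rw [← pow_add, hps]; congr 1; ring
    have h2 : ∀ i : Fin m, ((x i)^(s0*(c-1)+1))^2 = (x i)^(s0*(d-2)+2) := by
      intro i
      rw [← pow_mul, hps]; congr 1; ring
    have h3 : ∀ i : Fin m, ((x i)^((s0+2)*(c-1)+1))^2 = (x i)^((s0+2)*(d-2)+2) := by
      intro i
      rw [← pow_mul, hps]; congr 1; ring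
    simp only [h1, h2, h3] at hcs
    exact hcs
  -- e 1 is at least exp(-δd)
  have he1 : Real.exp (-(δ * d)) ≤ e 1 := by
    obtain ⟨S, hSsos, hSdeg, hSz⟩ := hc2
    have hLS : 0 ≤ L S := by
      obtain ⟨r, qf, rfl⟩ := hSsos
      rw [Lsum hsmul hadd]
      exact Finset.sum_nonneg (fun i _ => hsq (qf i) ((sq_deg_le_sos qf i).trans hSdeg))
    have hdegP : ((∑ i, (x i) ^ d) - C (Real.exp (-(δ * d))) : MvPolynomial (Fin n) ℝ).totalDegree ≤ d := by
      refine le_trans (deg_sub _ _) (max_le ?_ ?_)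
      · exact totalDegree_finsetSum_le (fun i _ => hdxp i d)
      · rw [totalDegree_C]; omega
    have h0 := hSz 1 (by
      rw [mul_one]
      refine le_trans (deg_sub _ _) (max_le (le_trans hdegP (by omega)) hSdeg))
    rw [mul_one, Lsub hsmul hadd, sub_eq_zero] at h0
    have hLP : L ((∑ i, (x i) ^ d) - C (Real.exp (-(δ * d)))) = L (∑ i, (x i)^d) - Real.exp (-(δ * d)) := by
      rw [Lsub hsmul hadd, LC hsmul hone]
    have hsum : L (∑ i, (x i)^d) = ∑ i, L ((x i)^d) := Lsum hsmul hadd _ _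
    have he1e : e 1 = ∑ i, L ((x i)^d) := by
      refine Finset.sum_congr rfl (fun i _ => ?_)
      congr 1
      congr 1
      omega
    rw [he1e, ← hsum]
    have := hLS
    rw [← h0] at this
    rw [hLP] at this
    linarith
  -- e 0 is at most σ
  have he0 : e 0 ≤ σ := by
    obtain ⟨B, hB⟩ := sigma_sos σ a hdict
    have hLX : L (∑ j, X j^2) = 1 := by
      have h0 := hc1 1 (by
        rw [mul_one]
        refine le_trans (deg_sub _ _) (max_le ?_ ?_)
        · exact totalDegree_finsetSum_le (fun j _ => by rw [totalDegree_X_pow]; omega)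
        · rw [totalDegree_one]; omega)
      rw [mul_one, Lsub hsmul hadd, sub_eq_zero, hone] at h0
      exact h0
    have hLrhs : 0 ≤ L (∑ i, (∑ j, C (B i j) * X j : MvPolynomial (Fin n) ℝ)^2) := by
      rw [Lsum hsmul hadd]
      refine Finset.sum_nonneg (fun i _ => ?_)
      refine hsq _ ?_
      refine le_trans (totalDegree_pow _ _) ?_
      have := deg_lin (B i)
      have hk3 : 2 ≤ 3*k := by omega
      linarith
    have hLeq := congrArg L hB
    rw [Lsub hsmul hadd, LCmul hsmul, hLX, mul_one] at hLeq
    have he0e : e 0 = ∑ i, L ((x i)^2) := by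
      refine Finset.sum_congr rfl (fun i _ => ?_)
      congr 1
      congr 1
      omega
    have hLsum2 : L (∑ i, (x i)^2) = ∑ i, L ((x i)^2) := Lsum hsmul hadd _ _
    rw [he0e, ← hLsum2]
    rw [← hLeq] at hLrhs
    linarith
  -- positivity facts
  have hσ0 : (0:ℝ) < σ := lt_of_lt_of_le zero_lt_one hσ
  have hεpos : (0:ℝ) < Real.exp (-(δ * d)) := Real.exp_pos _
  have he1pos : 0 < e 1 := lt_of_lt_of_le hεpos he1
  -- step down from k+2 to k
  have hstep : ∀ i : Fin m, L ((x i)^(k+2)) ≤ L ((x i)^k) := by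
    intro i
    have hkk : 2*((c-1)*t) = k := by rw [hk2, hps]; ring
    have hs := step_down hsmul hadd hsq (fun Q hQ => hc1 Q hQ) (a i) (hunit i)
      ((c-1)*t) (by omega)
    rw [hkk] at hs
    exact hs
  have het : e t = ∑ i, L ((x i)^(k+2)) := by
    refine Finset.sum_congr rfl (fun i _ => ?_)
    congr 2
    rw [hk2]; ring
  have hesum : e t ≤ ∑ i, L ((x i)^k) := by
    rw [het]
    exact Finset.sum_le_sum (fun i _ => hstep i)
  clear_value e
  -- the induction chain
  have chain : ∀ s0 : ℕ, s0 + 1 ≤ t →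
      (Real.exp (-(δ * d)))^(s0+1) ≤ σ^(s0+1) * e (s0+1) ∧
      e 1 * e s0 ≤ σ * e (s0+1) ∧ 0 < e (s0+1) := by
    intro s0
    induction s0 with
    | zero =>
      intro _
      refine ⟨?_, ?_, by simpa using he1pos⟩
      · simp only [zero_add, pow_one]
        nlinarith
      · simp only [zero_add]
        nlinarith [he1pos, he0, hepos 0 (by omega)]
    | succ s1 ih =>
      intro hle
      obtain ⟨hR, hB2, hpos⟩ := ih (by omega)
      have hAcur := hA s1 (by omega)
      have hnn2 : 0 ≤ e (s1+2) := hepos _ (by omega)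
      have hnn0 : 0 ≤ e s1 := hepos _ (by omega)
      have hs1pos : 0 < e s1 := by nlinarith [mul_pos hpos hpos]
      have hnpos : 0 < e (s1+2) := by nlinarith [mul_pos hpos hpos]
      have hB2' : e 1 * e (s1+1) ≤ σ * e (s1+2) := by
        nlinarith [mul_le_mul_of_nonneg_right hB2 (le_of_lt hpos),
          mul_le_mul_of_nonneg_left hAcur (le_of_lt hσ0)]
      refine ⟨?_, hB2', hnpos⟩
      have hpow1 : (Real.exp (-(δ * d)))^(s1+1+1) = (Real.exp (-(δ * d)))^(s1+1) * Real.exp (-(δ * d)) := pow_succ _ _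
      have hσp : (0:ℝ) ≤ σ^(s1+1) := le_of_lt (pow_pos hσ0 _)
      calc (Real.exp (-(δ * d)))^(s1+1+1)
          = (Real.exp (-(δ * d)))^(s1+1) * Real.exp (-(δ * d)) := pow_succ _ _
        _ ≤ (σ^(s1+1) * e (s1+1)) * Real.exp (-(δ * d)) :=
            mul_le_mul_of_nonneg_right hR (le_of_lt hεpos)
        _ ≤ (σ^(s1+1) * e (s1+1)) * e 1 :=
            mul_le_mul_of_nonneg_left he1 (by positivity)
        _ = σ^(s1+1) * (e 1 * e (s1+1)) := by ring
        _ ≤ σ^(s1+1) * (σ * e (s1+2)) := mul_le_mul_of_nonneg_left hB2' hσp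
        _ = σ^(s1+1+1) * e (s1+1+1) := by ring
  -- conclude the chain at t
  have htt : t - 1 + 1 = t := by omega
  have hch := chain (t-1) (by omega)
  rw [htt] at hch
  have hRt : (Real.exp (-(δ * d)))^t ≤ σ^t * e t := hch.1
  have hσt : (0:ℝ) < σ^t := pow_pos hσ0 t
  have hsum_lb : Real.exp (-(δ*d))^t / σ^t ≤ ∑ i, L ((x i)^k) := by
    rw [div_le_iff₀ hσt]
    nlinarith [mul_le_mul_of_nonneg_left hesum (le_of_lt hσt)]
  -- pigeonhole
  have hmR : (0:ℝ) < (m:ℝ) := by exact_mod_cast hm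
  have hne : (Finset.univ : Finset (Fin m)).Nonempty := ⟨⟨0, hm⟩, Finset.mem_univ _⟩
  have hpig : ∃ i ∈ (Finset.univ : Finset (Fin m)),
      Real.exp (-(δ*d))^t / σ^t / m ≤ L ((x i)^k) := by
    refine Finset.exists_le_of_sum_le hne ?_
    have hconst : ∑ _i : Fin m, Real.exp (-(δ*d))^t / σ^t / m
        = Real.exp (-(δ*d))^t / σ^t := by
      rw [Finset.sum_const, Finset.card_univ, Fintype.card_fin, nsmul_eq_mul,
        mul_comm, div_mul_cancel₀ _ (ne_of_gt hmR)]
    rw [hconst]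
    exact hsum_lb
  obtain ⟨i, -, hle⟩ := hpig
  -- numeric identities
  have hdR : (4:ℝ) ≤ (d:ℝ) := by exact_mod_cast hd4
  have hd2R : ((d:ℝ) - 2) ≠ 0 := by linarith
  have hkR : (k:ℝ) = ((d:ℝ) - 2) * (t:ℝ) := by
    have h1 : ((k:ℕ):ℝ) = (((d-2)*t : ℕ):ℝ) := by rw [hk2]
    rw [h1]
    push_cast [Nat.cast_sub (show 2 ≤ d by omega)]
    ring
  have hEXP : Real.exp (-(((d:ℝ)/((d:ℝ)-2)*δ + Real.log σ/((d:ℝ)-2)) * k))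
      = Real.exp (-(δ*d))^t / σ^t := by
    have harg : (((d:ℝ)/((d:ℝ)-2)*δ + Real.log σ/((d:ℝ)-2)) * k)
        = (t:ℝ)*(δ*(d:ℝ)) + (t:ℝ)*Real.log σ := by
      rw [hkR]; field_simp
    rw [harg, neg_add, Real.exp_add]
    have h1 : Real.exp (-((t:ℝ)*(δ*(d:ℝ)))) = Real.exp (-(δ*(d:ℝ)))^t := by
      rw [show -((t:ℝ)*(δ*(d:ℝ))) = (t:ℕ) * (-(δ*(d:ℝ))) by push_cast; ring,
        Real.exp_nat_mul]
    have h2 : Real.exp (-((t:ℝ)*Real.log σ)) = (σ^t)⁻¹ := by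
      rw [show -((t:ℝ)*Real.log σ) = (t:ℕ) * (-Real.log σ) by push_cast; ring,
        Real.exp_nat_mul, Real.exp_neg, Real.exp_log hσ0, inv_pow]
    rw [h1, h2, div_eq_mul_inv]
  have hkR0 : ((k:ℝ)) ≠ 0 := by
    have : (0:ℝ) < (k:ℝ) := by exact_mod_cast hk
    linarith
  refine ⟨i, ?_, ?_⟩
  · rw [hEXP]
    exact hle
  · have h2 : (((d:ℝ)/((d:ℝ)-2)*δ + Real.log σ/((d:ℝ)-2) + Real.log m/(k:ℝ)) * k)
        = ((d:ℝ)/((d:ℝ)-2)*δ + Real.log σ/((d:ℝ)-2))*k + Real.log m := by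
      field_simp
    rw [h2, neg_add, Real.exp_add]
    have h4 : Real.exp (-Real.log (m:ℝ)) = ((m:ℝ))⁻¹ := by
      rw [Real.exp_neg, Real.exp_log hmR]
    rw [h4, hEXP, ← div_eq_mul_inv]
    exact hle
end

section
/- Let A be a σ-dictionary with columns a¹,…,a^m ∈ ℝⁿ, let d ≥ 4 be even, and let k be a positive integer multiple of d−2. Let L be a pseudoexpectation on ℝ[u₁,…,u_n] of degree at least k + 2k/(d−2) that satisfies the constraint {‖u‖₂² = 1}. Then L((‖Aᵀu‖_d^d)^{k/(d−2)}) ≤ σ^{k/(d−2)} · L(‖Aᵀu‖_k^k). -/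
open MvPolynomial

abbrev Pol (n : ℕ) := MvPolynomial (Fin n) ℝ

noncomputable def Sph (n : ℕ) : Pol n := (∑ j, X j ^ 2) - 1

theorem sphDegree (n : ℕ) : (Sph n).totalDegree ≤ 2 := by
  rw [Sph, sub_eq_add_neg]
  refine (totalDegree_add _ _).trans (max_le ?_ ?_)
  · exact totalDegree_finsetSum_le fun j _ =>
      (totalDegree_pow _ 2).trans (by simp [totalDegree_X])
  · rw [totalDegree_neg, totalDegree_one]; omega

def Cert (n D : ℕ) (R : Pol n) : Prop :=
  ∃ s : Multiset (Pol n), ∃ Q : Pol n,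
    R = (s.map fun p => p ^ 2).sum + Sph n * Q ∧
      (∀ p ∈ s, p.totalDegree * 2 ≤ D) ∧ (Q = 0 ∨ Q.totalDegree + 2 ≤ D)

namespace Cert

variable {n D D₁ D₂ : ℕ} {R R₁ R₂ : Pol n}

theorem zero : Cert n D 0 := ⟨0, 0, by simp, by simp, Or.inl rfl⟩

theorem sq (p : Pol n) (h : p.totalDegree * 2 ≤ D) : Cert n D (p ^ 2) :=
  ⟨{p}, 0, by simp, by simpa using h, Or.inl rfl⟩

theorem one (hD : True := trivial) : Cert n D 1 := by
  simpa using sq (n := n) (D := D) 1 (by simp)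

theorem sph (Q : Pol n) (h : Q.totalDegree + 2 ≤ D) : Cert n D (Sph n * Q) :=
  ⟨0, Q, by simp, by simp, Or.inr h⟩

theorem of_eq (h : Cert n D R₁) (e : R₁ = R₂) : Cert n D R₂ := e ▸ h

theorem mono (h : Cert n D₁ R) (hD : D₁ ≤ D₂) : Cert n D₂ R := by
  obtain ⟨s, Q, rfl, hs, hQ⟩ := h
  exact ⟨s, Q, rfl, fun p hp => (hs p hp).trans hD,
    hQ.imp id fun h' => h'.trans hD⟩

theorem add (h₁ : Cert n D R₁) (h₂ : Cert n D R₂) : Cert n D (R₁ + R₂) := by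
  obtain ⟨s₁, Q₁, rfl, hs₁, hQ₁⟩ := h₁
  obtain ⟨s₂, Q₂, rfl, hs₂, hQ₂⟩ := h₂
  refine ⟨s₁ + s₂, Q₁ + Q₂, by rw [Multiset.map_add, Multiset.sum_add]; ring, ?_, ?_⟩
  · intro p hp; rcases Multiset.mem_add.1 hp with h | h
    · exact hs₁ p h
    · exact hs₂ p h
  · rcases hQ₁ with rfl | h₁ <;> rcases hQ₂ with rfl | h₂
    · exact Or.inl (by simp)
    · exact Or.inr (by simpa using h₂)
    · exact Or.inr (by simpa using h₁)
    · refine Or.inr ?_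
      have := (totalDegree_add Q₁ Q₂).trans (max_le (show Q₁.totalDegree ≤ D - 2 by omega)
        (show Q₂.totalDegree ≤ D - 2 by omega))
      omega

theorem smul {c : ℝ} (hc : 0 ≤ c) (h : Cert n D R) : Cert n D (c • R) := by
  obtain ⟨s, Q, rfl, hs, hQ⟩ := h
  refine ⟨s.map fun p => C (Real.sqrt c) * p, c • Q, ?_, ?_, ?_⟩
  · rw [Multiset.map_map]
    have h1 : ∀ p : Pol n, ((C (Real.sqrt c) * p) ^ 2) = C c * p ^ 2 := by
      intro p
      rw [mul_pow, ← C_pow, Real.sq_sqrt hc]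
    simp only [Function.comp, h1]
    simp only [smul_eq_C_mul]
    rw [Multiset.sum_map_mul_left]
    ring
  · intro p hp
    obtain ⟨q, hq, rfl⟩ := Multiset.mem_map.1 hp
    exact le_trans (Nat.mul_le_mul_right 2 ((totalDegree_mul _ _).trans
      (by simp [totalDegree_C]))) (hs q hq)
  · rcases hQ with rfl | h
    · exact Or.inl (by simp)
    · exact Or.inr ((Nat.add_le_add_right (totalDegree_smul_le c Q) 2).trans h)

theorem _root_.degMultisetSum {n D : ℕ} {s : Multiset (Pol n)}
    (h : ∀ p ∈ s, p.totalDegree ≤ D) : s.sum.totalDegree ≤ D := by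
  induction s using Multiset.induction with
  | empty => simp
  | cons a s ih =>
    rw [Multiset.sum_cons]
    refine (totalDegree_add _ _).trans (max_le (h a (by simp)) (ih fun p hp => h p (by simp [hp])))

theorem mul (h₁ : Cert n D₁ R₁) (h₂ : Cert n D₂ R₂) : Cert n (D₁ + D₂) (R₁ * R₂) := by
  obtain ⟨s₁, Q₁, rfl, hs₁, hQ₁⟩ := h₁
  obtain ⟨s₂, Q₂, rfl, hs₂, hQ₂⟩ := h₂
  set T₁ : Pol n := (s₁.map fun p => p ^ 2).sum with hT₁
  set T₂ : Pol n := (s₂.map fun p => p ^ 2).sum with hT₂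
  have hdT₁ : T₁.totalDegree ≤ D₁ := by
    refine degMultisetSum fun p hp => ?_
    obtain ⟨q, hq, rfl⟩ := Multiset.mem_map.1 hp
    exact (totalDegree_pow q 2).trans (by have := hs₁ q hq; omega)
  have hdT₂ : T₂.totalDegree ≤ D₂ := by
    refine degMultisetSum fun p hp => ?_
    obtain ⟨q, hq, rfl⟩ := Multiset.mem_map.1 hp
    exact (totalDegree_pow q 2).trans (by have := hs₂ q hq; omega)
  refine ⟨s₁.bind fun p => s₂.map fun q => p * q,
    Q₁ * T₂ + Q₂ * T₁ + Sph n * (Q₁ * Q₂), ?_, ?_, ?_⟩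
  · have : ((s₁.bind fun p => s₂.map fun q => p * q).map fun p => p ^ 2).sum = T₁ * T₂ := by
      rw [Multiset.map_bind, Multiset.sum_bind, hT₁, hT₂]
      have : ∀ p : Pol n, ((s₂.map fun q => p * q).map fun r => r ^ 2).sum
          = p ^ 2 * (s₂.map fun q => q ^ 2).sum := by
        intro p
        rw [Multiset.map_map]
        have : ((fun r => r ^ 2) ∘ fun q => p * q) = fun q => p ^ 2 * q ^ 2 := by
          funext q; simp [mul_pow]
        rw [this, Multiset.sum_map_mul_left]
      simp only [this]
      rw [Multiset.sum_map_mul_right]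
    rw [this]
    ring
  · intro p hp
    obtain ⟨q₁, hq₁, hp'⟩ := Multiset.mem_bind.1 hp
    obtain ⟨q₂, hq₂, rfl⟩ := Multiset.mem_map.1 hp'
    have := (totalDegree_mul q₁ q₂)
    have h1 := hs₁ q₁ hq₁; have h2 := hs₂ q₂ hq₂
    omega
  · rcases hQ₁ with rfl | h₁
    · rcases hQ₂ with rfl | h₂
      · exact Or.inl (by simp)
      · refine Or.inr ?_
        simp only [zero_mul, mul_zero, zero_add, add_zero]
        have := (totalDegree_mul Q₂ T₁)
        omega
    · rcases hQ₂ with rfl | h₂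
      · refine Or.inr ?_
        simp only [zero_mul, mul_zero, zero_add, add_zero]
        have := (totalDegree_mul Q₁ T₂)
        omega
      · refine Or.inr ?_
        have hd1 := totalDegree_mul Q₁ T₂
        have hd2 := totalDegree_mul Q₂ T₁
        have hdS : (Sph n).totalDegree ≤ 2 := sphDegree n
        have hd3 := totalDegree_mul (Sph n) (Q₁ * Q₂)
        have hd4 := totalDegree_mul Q₁ Q₂
        have hd5 := totalDegree_add (Q₁ * T₂ + Q₂ * T₁) (Sph n * (Q₁ * Q₂))
        have hd6 := totalDegree_add (Q₁ * T₂) (Q₂ * T₁)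
        omega

theorem pow (h : Cert n D R) : ∀ e : ℕ, Cert n (D * e) (R ^ e)
  | 0 => by simpa using sq (n := n) (D := 0) 1 (by simp)
  | e + 1 => by
    have := (Cert.pow h e).mul h
    rw [← pow_succ] at this
    exact this.mono (by ring_nf; omega)

theorem finsetSum {ι : Type*} (s : Finset ι) (f : ι → Pol n)
    (h : ∀ i ∈ s, Cert n D (f i)) : Cert n D (∑ i ∈ s, f i) := by
  classical
  induction s using Finset.induction with
  | empty => simpa using zero
  | insert _ _ hx ih =>
    rw [Finset.sum_insert hx]
    exact (h _ (by simp)).add (ih fun i hi => h i (by simp [hi]))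

end Cert

theorem cert_nonneg {n K : ℕ} {L : Pol n → ℝ} (hL : IsPseudoExpectation n K L)
    (hc : SatisfiesZero n K L (Sph n)) {R : Pol n} (h : Cert n K R) : 0 ≤ L R := by
  obtain ⟨Ladd, Lsmul, -, Lsq⟩ := hL
  have L0 : L 0 = 0 := by
    have := Lsmul 0 0; simpa using this
  obtain ⟨s, Q, rfl, hs, hQ⟩ := h
  rw [Ladd]
  have h1 : 0 ≤ L (s.map fun p => p ^ 2).sum := by
    clear hQ
    induction s using Multiset.induction with
    | empty => simp [L0]
    | cons a s ih =>
      rw [Multiset.map_cons, Multiset.sum_cons, Ladd]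
      have ha : 0 ≤ L (a ^ 2) := by
        refine Lsq _ ((totalDegree_pow a 2).trans ?_)
        have := hs a (by simp); omega
      have := ih (fun p hp => hs p (by simp [hp]))
      linarith
  have h2 : L (Sph n * Q) = 0 := by
    rcases hQ with rfl | hQ
    · rw [mul_zero, L0]
    · exact hc Q ((totalDegree_mul _ _).trans (by have := sphDegree n; omega))
  linarith



theorem sum_outer {R : Type*} [CommRing R] {n : ℕ} (w x : Fin n → R) :
    ∑ j, ∑ l, w j * w l * (x j * x l) = (∑ j, w j * x j) ^ 2 := by
  rw [sq, Finset.sum_mul_sum]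
  exact Finset.sum_congr rfl fun j _ => Finset.sum_congr rfl fun l _ => by ring

theorem sum_delta {R : Type*} [CommRing R] {n : ℕ} (c : R) (x : Fin n → R) :
    ∑ j, ∑ l, c * (if j = l then 1 else 0) * (x j * x l) = c * ∑ j, x j ^ 2 := by
  rw [Finset.mul_sum]
  refine Finset.sum_congr rfl fun j _ => ?_
  rw [Finset.sum_eq_single j (fun l _ hl => by simp [Ne.symm hl]) (by simp)]
  simp [sq]

theorem cert_quadForm {n : ℕ} (M : Matrix (Fin n) (Fin n) ℝ)
    (hsym : ∀ j l, M j l = M l j)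
    (hpsd : ∀ x : Fin n → ℝ, 0 ≤ ∑ j, ∑ l, M j l * (x j * x l)) :
    Cert n 2 (∑ j, ∑ l, C (M j l) * (X j * X l)) := by
  have hps : M.PosSemidef := by
    refine Matrix.PosSemidef.of_dotProduct_mulVec_nonneg ?_ ?_
    · ext j l
      simpa [Matrix.conjTranspose_apply] using (hsym l j)
    · intro x
      have e : dotProduct (star x) (M.mulVec x) = ∑ j, ∑ l, M j l * (x j * x l) := by
        simp only [dotProduct, Matrix.mulVec, star_trivial, Finset.mul_sum]
        exact Finset.sum_congr rfl fun j _ => Finset.sum_congr rfl fun l _ => by ring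
      rw [e]; exact hpsd x
  obtain ⟨B, hB⟩ : ∃ B : Matrix (Fin n) (Fin n) ℝ, M = Matrix.conjTranspose B * B := by
    open scoped MatrixOrder in exact CStarAlgebra.nonneg_iff_eq_star_mul_self.mp hps.nonneg
  have hM : ∀ j l, M j l = ∑ p, B p j * B p l := by
    intro j l; rw [hB]
    simp [Matrix.mul_apply, Matrix.conjTranspose_apply]
  have key : (∑ j, ∑ l, C (M j l) * (X j * X l) : Pol n)
      = ∑ p, (∑ l, C (B p l) * X l) ^ 2 := by
    have h1 : ∀ p : Fin n, ((∑ l, C (B p l) * X l : Pol n)) ^ 2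
        = ∑ j, ∑ l, C (B p j) * C (B p l) * (X j * X l) := by
      intro p
      rw [sq, Finset.sum_mul_sum]
      exact Finset.sum_congr rfl fun j _ => Finset.sum_congr rfl fun l _ => by ring
    calc (∑ j, ∑ l, C (M j l) * (X j * X l) : Pol n)
        = ∑ j, ∑ l, ∑ p, C (B p j) * C (B p l) * (X j * X l) := by
          refine Finset.sum_congr rfl fun j _ => Finset.sum_congr rfl fun l _ => ?_
          rw [hM j l, map_sum, Finset.sum_mul]
          exact Finset.sum_congr rfl fun p _ => by rw [map_mul]
      _ = ∑ j, ∑ p, ∑ l, C (B p j) * C (B p l) * (X j * X l) :=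
          Finset.sum_congr rfl fun j _ => Finset.sum_comm
      _ = ∑ p, ∑ j, ∑ l, C (B p j) * C (B p l) * (X j * X l) := Finset.sum_comm
      _ = ∑ p, (∑ l, C (B p l) * X l) ^ 2 :=
          Finset.sum_congr rfl fun p _ => (h1 p).symm
  rw [key]
  refine Cert.finsetSum _ _ fun p _ => Cert.sq _ ?_
  have : (∑ l, C (B p l) * X l : Pol n).totalDegree ≤ 1 :=
    totalDegree_finsetSum_le fun l _ => (totalDegree_mul _ _).trans
      (by simp [totalDegree_C, totalDegree_X])
  omega

theorem sum_delta' {R : Type*} [CommRing R] {n : ℕ} (x : Fin n → R) :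
    ∑ j, ∑ l, (if j = l then (1 : R) else 0) * (x j * x l) = ∑ j, x j ^ 2 := by
  refine Finset.sum_congr rfl fun j _ => ?_
  rw [Finset.sum_eq_single j (fun l _ hl => by simp [Ne.symm hl]) (by simp)]
  simp [sq]

theorem cert_unit {n m : ℕ} (a : Fin m → Fin n → ℝ) (i : Fin m)
    (hunit : ∑ j, a i j ^ 2 = 1) :
    Cert n 2 ((∑ j, X j ^ 2) - (∑ j, C (a i j) * X j) ^ 2) := by
  have key : ((∑ j, X j ^ 2) - (∑ j, C (a i j) * X j) ^ 2 : Pol n)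
      = ∑ j, ∑ l, C ((if j = l then (1:ℝ) else 0) - a i j * a i l) * (X j * X l) := by
    have : ∀ j l : Fin n, (C ((if j = l then (1:ℝ) else 0) - a i j * a i l) : Pol n)
        * (X j * X l)
        = (if j = l then (1 : Pol n) else 0) * (X j * X l)
          - C (a i j) * C (a i l) * (X j * X l) := by
      intro j l
      rw [map_sub, map_mul, apply_ite C, map_one, map_zero, sub_mul]
    simp only [this, Finset.sum_sub_distrib]
    rw [sum_delta', sum_outer]
  rw [key]
  refine cert_quadForm _ (fun j l => by rw [mul_comm (a i j)]; by_cases h : j = l <;> simp [h, eq_comm]) ?_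
  intro x
  have h1 : ∑ j, ∑ l, ((if j = l then (1:ℝ) else 0) - a i j * a i l) * (x j * x l)
      = (∑ j, x j ^ 2) - (∑ j, a i j * x j) ^ 2 := by
    simp only [sub_mul, Finset.sum_sub_distrib]
    rw [sum_delta', sum_outer]
  rw [h1, sub_nonneg]
  calc (∑ j, a i j * x j) ^ 2 ≤ (∑ j, a i j ^ 2) * ∑ j, x j ^ 2 :=
        Finset.sum_mul_sq_le_sq_mul_sq _ _ _
    _ = ∑ j, x j ^ 2 := by rw [hunit, one_mul]

theorem cert_dict {n m : ℕ} (σ : ℝ) (a : Fin m → Fin n → ℝ)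
    (hdict : ∀ u : Fin n → ℝ, ∑ i, (∑ j, a i j * u j) ^ 2 ≤ σ * ∑ j, u j ^ 2) :
    Cert n 2 (σ • (∑ j, X j ^ 2) - ∑ i, (∑ j, C (a i j) * X j) ^ 2) := by
  have key : (σ • (∑ j, X j ^ 2) - ∑ i, (∑ j, C (a i j) * X j) ^ 2 : Pol n)
      = ∑ j, ∑ l, C (σ * (if j = l then (1:ℝ) else 0) - ∑ i, a i j * a i l)
          * (X j * X l) := by
    have : ∀ j l : Fin n, (C (σ * (if j = l then (1:ℝ) else 0) - ∑ i, a i j * a i l) : Pol n)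
        * (X j * X l)
        = C σ * ((if j = l then (1 : Pol n) else 0) * (X j * X l))
          - ∑ i, C (a i j) * C (a i l) * (X j * X l) := by
      intro j l
      rw [map_sub, map_mul, apply_ite C, map_one, map_zero, sub_mul, map_sum, Finset.sum_mul]
      rw [mul_assoc]
      congr 1
      exact Finset.sum_congr rfl fun p _ => by rw [map_mul]
    simp only [this, Finset.sum_sub_distrib]
    simp only [← Finset.mul_sum]
    rw [sum_delta', smul_eq_C_mul]
    congr 1
    exact (calc ∑ j, ∑ l, ∑ i, C (a i j) * C (a i l) * (X j * X l)
        = ∑ j, ∑ i, ∑ l, C (a i j) * C (a i l) * (X j * X l) :=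
          Finset.sum_congr rfl fun j _ => Finset.sum_comm
      _ = ∑ i, ∑ j, ∑ l, C (a i j) * C (a i l) * (X j * X l) := Finset.sum_comm
      _ = ∑ i, (∑ j, C (a i j) * X j) ^ 2 :=
          Finset.sum_congr rfl fun i _ => sum_outer _ _).symm
  rw [key]
  refine cert_quadForm _ (fun j l => ?_) ?_
  · congr 1
    · by_cases h : j = l <;> simp [h, eq_comm]
    · exact Finset.sum_congr rfl fun i _ => mul_comm _ _
  · intro x
    have h1 : ∑ j, ∑ l, (σ * (if j = l then (1:ℝ) else 0) - ∑ i, a i j * a i l) * (x j * x l)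
        = σ * (∑ j, x j ^ 2) - ∑ i, (∑ j, a i j * x j) ^ 2 := by
      simp only [sub_mul, Finset.sum_sub_distrib]
      congr 1
      · simp only [mul_assoc, ← Finset.mul_sum]
        rw [sum_delta']
      · calc ∑ j, ∑ l, (∑ i, a i j * a i l) * (x j * x l)
            = ∑ j, ∑ l, ∑ i, a i j * a i l * (x j * x l) := by
              exact Finset.sum_congr rfl fun j _ => Finset.sum_congr rfl fun l _ =>
                Finset.sum_mul ..
          _ = ∑ j, ∑ i, ∑ l, a i j * a i l * (x j * x l) :=
              Finset.sum_congr rfl fun j _ => Finset.sum_comm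
          _ = ∑ i, ∑ j, ∑ l, a i j * a i l * (x j * x l) := Finset.sum_comm
          _ = ∑ i, (∑ j, a i j * x j) ^ 2 :=
              Finset.sum_congr rfl fun i _ => sum_outer _ _
    rw [h1, sub_nonneg]
    exact hdict x

theorem cert_pair {n : ℕ} (c w z : Pol n) (γ ω t : ℕ) (ht : 1 ≤ t)
    (hc : c.totalDegree ≤ γ) (hw : w.totalDegree ≤ ω) (hz : z.totalDegree ≤ ω) :
    Cert n (2 * (γ + 2 * ω + ω * (t - 1)))
      (c ^ 2 * ((w ^ 2 - z ^ 2) * ((w ^ 2) ^ t - (z ^ 2) ^ t))) := by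
  have hg := geom_sum₂_mul (w ^ 2) (z ^ 2) t
  have key : ∑ l ∈ Finset.range t, (c * (w ^ 2 - z ^ 2) * (w ^ l * z ^ (t - 1 - l))) ^ 2
      = c ^ 2 * ((w ^ 2 - z ^ 2) * ((w ^ 2) ^ t - (z ^ 2) ^ t)) := by
    calc ∑ l ∈ Finset.range t, (c * (w ^ 2 - z ^ 2) * (w ^ l * z ^ (t - 1 - l))) ^ 2
        = ∑ l ∈ Finset.range t,
            c ^ 2 * (w ^ 2 - z ^ 2) * ((w ^ 2) ^ l * (z ^ 2) ^ (t - 1 - l) * (w ^ 2 - z ^ 2)) :=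
          Finset.sum_congr rfl fun l _ => by ring
      _ = c ^ 2 * (w ^ 2 - z ^ 2) *
            ((∑ l ∈ Finset.range t, (w ^ 2) ^ l * (z ^ 2) ^ (t - 1 - l)) * (w ^ 2 - z ^ 2)) := by
          rw [← Finset.mul_sum, ← Finset.sum_mul]
      _ = c ^ 2 * ((w ^ 2 - z ^ 2) * ((w ^ 2) ^ t - (z ^ 2) ^ t)) := by rw [hg]; ring
  refine (Cert.finsetSum _ _ fun l hl => Cert.sq _ ?_).of_eq key
  have hl' : l ≤ t - 1 := by
    have := Finset.mem_range.1 hl; omega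
  have d1 : (w ^ l).totalDegree ≤ ω * l :=
    (totalDegree_pow w l).trans (le_trans (Nat.mul_le_mul_left l hw) (le_of_eq (Nat.mul_comm l ω)))
  have d2 : (z ^ (t - 1 - l)).totalDegree ≤ ω * (t - 1 - l) :=
    (totalDegree_pow z _).trans
      (le_trans (Nat.mul_le_mul_left _ hz) (le_of_eq (Nat.mul_comm _ ω)))
  have d3 : (w ^ 2 - z ^ 2).totalDegree ≤ 2 * ω := by
    rw [sub_eq_add_neg]
    refine (totalDegree_add _ _).trans (max_le ?_ ?_)
    · exact (totalDegree_pow w 2).trans (by omega)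
    · rw [totalDegree_neg]
      exact (totalDegree_pow z 2).trans (by omega)
  have d4 := totalDegree_mul (c * (w ^ 2 - z ^ 2)) (w ^ l * z ^ (t - 1 - l))
  have d5 := totalDegree_mul c (w ^ 2 - z ^ 2)
  have d6 := totalDegree_mul (w ^ l) (z ^ (t - 1 - l))
  have hsum : ω * l + ω * (t - 1 - l) = ω * (t - 1) := by
    rw [← Nat.mul_add]
    congr 1
    omega
  omega

theorem certSumPowE {n m : ℕ} (v : Fin m → Pol n) (hv : ∀ i, (v i).totalDegree ≤ 1)
    (r D E : ℕ) (h2r : 2 * r ≤ D) (hE : E = 2 * r) :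
    Cert n D (∑ i, (v i) ^ E) := by
  refine Cert.finsetSum _ _ fun i _ => (Cert.sq ((v i) ^ r) ?_).of_eq (by rw [hE]; ring)
  have := (totalDegree_pow (v i) r).trans (Nat.mul_le_mul_left r (hv i))
  omega

theorem sum_sym {R : Type*} [CommRing R] {m : ℕ} (f g p q : Fin m → R) :
    ∑ i, ∑ j, (f i * g j + f j * g i - (p i * q j + p j * q i))
      = 2 * ((∑ i, f i) * (∑ j, g j) - (∑ i, p i) * (∑ j, q j)) := by
  simp only [Finset.sum_add_distrib, Finset.sum_sub_distrib]
  rw [show (∑ i : Fin m, ∑ j : Fin m, f j * g i) = ∑ i, ∑ j, f i * g j from Finset.sum_comm,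
    show (∑ i : Fin m, ∑ j : Fin m, p j * q i) = ∑ i, ∑ j, p i * q j from Finset.sum_comm,
    ← Finset.sum_mul_sum, ← Finset.sum_mul_sum]
  ring

theorem cert_holder {n m : ℕ} (v : Fin m → Pol n) (hv : ∀ i, (v i).totalDegree ≤ 1)
    (e : ℕ) (he : 1 ≤ e) :
    ∀ s : ℕ, Cert n ((2 * e + 2) * (s + 1))
      ((∑ i, (v i) ^ 2) ^ s * (∑ i, (v i) ^ (2 * (e * (s + 1)) + 2))
        - (∑ i, (v i) ^ (2 * e + 2)) ^ (s + 1)) := by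
  intro s
  induction s with
  | zero =>
    refine Cert.zero.of_eq ?_
    rw [pow_zero, one_mul, pow_one, show 2 * (e * (0 + 1)) + 2 = 2 * e + 2 by ring, sub_self]
  | succ s IH =>
    have certP : Cert n (2 * e + 2) (∑ i, (v i) ^ (2 * e + 2)) :=
      certSumPowE v hv (e + 1) _ _ (by omega) (by ring)
    have certW : Cert n 2 (∑ i, (v i) ^ 2) := certSumPowE v hv 1 2 2 (by omega) rfl
    have pairCert : ∀ i : Fin m, ∀ _ : i ∈ (Finset.univ : Finset (Fin m)),
        Cert n (2 * (2 + 2 * e + e * s))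
        (∑ j, ((v i * v j) ^ 2 * (((v i ^ e) ^ 2 - (v j ^ e) ^ 2)
          * (((v i ^ e) ^ 2) ^ (s + 1) - ((v j ^ e) ^ 2) ^ (s + 1))))) := by
      intro i _
      refine Cert.finsetSum _ _ fun j _ => ?_
      have hvi : (v i ^ e).totalDegree ≤ e :=
        (totalDegree_pow _ _).trans (le_trans (Nat.mul_le_mul_left e (hv i)) (le_of_eq (Nat.mul_one e)))
      have hvj : (v j ^ e).totalDegree ≤ e :=
        (totalDegree_pow _ _).trans (le_trans (Nat.mul_le_mul_left e (hv j)) (le_of_eq (Nat.mul_one e)))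
      have := cert_pair (v i * v j) (v i ^ e) (v j ^ e) 2 e (s + 1) (by omega)
        ((totalDegree_mul _ _).trans (by have := hv i; have := hv j; omega)) hvi hvj
      exact this.mono (le_of_eq (by simp))
    have midCert : Cert n (2 * (2 + 2 * e + e * s))
        ((∑ i, (v i) ^ 2) * (∑ i, (v i) ^ (2 * (e * (s + 2)) + 2))
          - (∑ i, (v i) ^ (2 * e + 2)) * (∑ i, (v i) ^ (2 * (e * (s + 1)) + 2))) := by
      have expand : ∀ i j : Fin m,
          ((v i * v j) ^ 2 * (((v i ^ e) ^ 2 - (v j ^ e) ^ 2)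
            * (((v i ^ e) ^ 2) ^ (s + 1) - ((v j ^ e) ^ 2) ^ (s + 1))))
          = ((v i) ^ 2 * (v j) ^ (2 * (e * (s + 2)) + 2)
              + (v j) ^ 2 * (v i) ^ (2 * (e * (s + 2)) + 2)
            - ((v i) ^ (2 * e + 2) * (v j) ^ (2 * (e * (s + 1)) + 2)
              + (v j) ^ (2 * e + 2) * (v i) ^ (2 * (e * (s + 1)) + 2))) :=
        fun i j => by ring
      have hsum : ∑ i, ∑ j, ((v i * v j) ^ 2 * (((v i ^ e) ^ 2 - (v j ^ e) ^ 2)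
            * (((v i ^ e) ^ 2) ^ (s + 1) - ((v j ^ e) ^ 2) ^ (s + 1))))
          = 2 * ((∑ i, (v i) ^ 2) * (∑ i, (v i) ^ (2 * (e * (s + 2)) + 2))
              - (∑ i, (v i) ^ (2 * e + 2)) * (∑ i, (v i) ^ (2 * (e * (s + 1)) + 2))) := by
        rw [Finset.sum_congr rfl fun i _ => Finset.sum_congr rfl fun j _ => expand i j]
        exact sum_sym _ _ _ _
      have big := (Cert.finsetSum (n := n) Finset.univ _ pairCert).smul
        (c := (1/2 : ℝ)) (by norm_num)
      refine big.of_eq ?_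
      rw [hsum, smul_eq_C_mul, ← mul_assoc,
        show (C (1/2 : ℝ) : Pol n) * 2 = 1 by
          rw [← map_ofNat (C : ℝ →+* Pol n) 2, ← map_mul]; norm_num,
        one_mul]
    have h1 := (certW.pow s).mul midCert
    have h2 := certP.mul IH
    refine ((h1.mono (le_of_eq (by ring))).add (h2.mono (le_of_eq (by ring)))).of_eq ?_
    ring

theorem degSumPow {n m : ℕ} (v : Fin m → Pol n) (hv : ∀ i, (v i).totalDegree ≤ 1)
    (E : ℕ) : (∑ i, (v i) ^ E).totalDegree ≤ E :=
  totalDegree_finsetSum_le fun i _ => (totalDegree_pow _ _).trans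
    (le_trans (Nat.mul_le_mul_left E (hv i)) (le_of_eq (Nat.mul_one E)))

theorem main_cert {n m : ℕ} (σ : ℝ) (hσ : 1 ≤ σ) (v : Fin m → Pol n)
    (hv : ∀ i, (v i).totalDegree ≤ 1)
    (hdictC : Cert n 2 (σ • (∑ j, X j ^ 2) - ∑ i, (v i) ^ 2))
    (hunitC : ∀ i, Cert n 2 ((∑ j, X j ^ 2) - (v i) ^ 2))
    (e t : ℕ) (he : 1 ≤ e) (ht : 1 ≤ t) :
    Cert n ((2 * e + 2) * t)
      (σ ^ t • (∑ i, (v i) ^ (2 * (e * t))) - (∑ i, (v i) ^ (2 * e + 2)) ^ t) := by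
  have hD : 2 * (e * t) + 2 * t = (2 * e + 2) * t := by ring
  -- R1
  have hR1 : Cert n ((2 * e + 2) * t)
      ((σ ^ t - σ ^ (t - 1)) • ∑ i, (v i) ^ (2 * (e * t))) := by
    refine Cert.smul ?_ (certSumPowE v hv (e * t) _ _ ?_ rfl)
    · have : σ ^ (t - 1) ≤ σ ^ t := pow_le_pow_right₀ hσ (Nat.sub_le t 1)
      linarith
    · calc 2 * (e * t) ≤ 2 * (e * t) + 2 * t := Nat.le_add_right _ _
        _ = (2 * e + 2) * t := hD
  -- R2
  have hR2 : Cert n ((2 * e + 2) * t)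
      (σ ^ (t - 1) • ∑ i, ((v i) ^ (2 * (e * t)) - (v i) ^ (2 * (e * t) + 2))) := by
    refine Cert.smul (pow_nonneg (by linarith) _) (Cert.finsetSum _ _ fun i _ => ?_)
    have hsph : Cert n ((2 * e + 2) * t) (Sph n * (-((v i) ^ (2 * (e * t))))) := by
      refine Cert.sph _ ?_
      have : ((v i) ^ (2 * (e * t))).totalDegree ≤ 2 * (e * t) :=
        (totalDegree_pow _ _).trans
          (le_trans (Nat.mul_le_mul_left _ (hv i)) (le_of_eq (Nat.mul_one _)))
      rw [totalDegree_neg]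
      calc ((v i) ^ (2 * (e * t))).totalDegree + 2 ≤ 2 * (e * t) + 2 * t := by
            have h2 : 2 ≤ 2 * t := by omega
            omega
        _ = (2 * e + 2) * t := hD
    have hmul : Cert n (2 * (e * t) + 2)
        (((v i) ^ (e * t)) ^ 2 * ((∑ j, X j ^ 2) - (v i) ^ 2)) := by
      refine Cert.mul (Cert.sq _ ?_) (hunitC i)
      have := (totalDegree_pow (v i) (e * t)).trans
        (le_trans (Nat.mul_le_mul_left _ (hv i)) (le_of_eq (Nat.mul_one _)))
      omega
    have hmul' := hmul.mono (show 2 * (e * t) + 2 ≤ (2 * e + 2) * t by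
      rw [← hD]; omega)
    refine (hsph.add hmul').of_eq ?_
    rw [Sph]
    ring
  -- R3
  have certW : Cert n 2 (∑ i, (v i) ^ 2) := certSumPowE v hv 1 2 2 (by omega) rfl
  have certTT : Cert n (2 * (e * t) + 2) (∑ i, (v i) ^ (2 * (e * t) + 2)) :=
    certSumPowE v hv (e * t + 1) _ _ (le_of_eq (by ring)) (by ring)
  have certCσW : Cert n 2 (C σ - ∑ i, (v i) ^ 2) := by
    refine (hdictC.add (Cert.sph (-(C σ)) ?_)).of_eq ?_
    · rw [totalDegree_neg, totalDegree_C]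
    · rw [Sph, smul_eq_C_mul]
      ring
  have hR3 : Cert n ((2 * e + 2) * t)
      (σ ^ (t - 1) • (∑ i, (v i) ^ (2 * (e * t) + 2))
        - (∑ i, (v i) ^ 2) ^ (t - 1) * (∑ i, (v i) ^ (2 * (e * t) + 2))) := by
    have hterm : ∀ j ∈ Finset.range (t - 1), Cert n ((2 * e + 2) * t)
        (σ ^ j • ((∑ i, (v i) ^ 2) ^ (t - 1 - 1 - j)
          * ((C σ - ∑ i, (v i) ^ 2) * (∑ i, (v i) ^ (2 * (e * t) + 2))))) := by
      intro j hj
      have hj' := Finset.mem_range.1 hj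
      refine Cert.smul (pow_nonneg (by linarith) _) ?_
      refine ((certW.pow (t - 1 - 1 - j)).mul (certCσW.mul certTT)).mono ?_
      rw [← hD]
      have hq : ∀ q : ℕ, 2 * (t - 1 - 1 - j) + (2 + (2 * q + 2)) ≤ 2 * q + 2 * t := by
        intro q; omega
      exact hq (e * t)
    refine (Cert.finsetSum _ _ hterm).of_eq ?_
    have key : ∑ j ∈ Finset.range (t - 1), σ ^ j • ((∑ i, (v i) ^ 2) ^ (t - 1 - 1 - j)
          * ((C σ - ∑ i, (v i) ^ 2) * (∑ i, (v i) ^ (2 * (e * t) + 2))))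
        = ((C σ) ^ (t - 1) - (∑ i, (v i) ^ 2) ^ (t - 1))
            * (∑ i, (v i) ^ (2 * (e * t) + 2)) := by
      rw [← geom_sum₂_mul (C σ) (∑ i, (v i) ^ 2) (t - 1), Finset.sum_mul, Finset.sum_mul]
      refine Finset.sum_congr rfl fun j _ => ?_
      rw [smul_eq_C_mul, ← map_pow]
      ring
    rw [key, sub_mul, smul_eq_C_mul, ← map_pow]
  -- R4
  have hR4 : Cert n ((2 * e + 2) * t)
      ((∑ i, (v i) ^ 2) ^ (t - 1) * (∑ i, (v i) ^ (2 * (e * t) + 2))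
        - (∑ i, (v i) ^ (2 * e + 2)) ^ t) := by
    have := cert_holder v hv e he (t - 1)
    have htt : t - 1 + 1 = t := by omega
    rw [htt] at this
    exact this
  -- assemble
  refine (((hR1.add hR2).add hR3).add hR4).of_eq ?_
  rw [Finset.sum_sub_distrib]
  simp only [smul_eq_C_mul, map_sub, map_pow]
  ring

/-- SOS Hölder: for a `σ`-dictionary `A`, even `d ≥ 4`, `k` a positive multiple of `d-2`,
and a pseudoexpectation `L` of degree at least `k + 2k/(d-2)` satisfying `{‖u‖₂² = 1}`,
`L ((‖Aᵀu‖_d^d)^{k/(d-2)}) ≤ σ^{k/(d-2)} L (‖Aᵀu‖_k^k)`. -/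
theorem stmt15 (n m : ℕ) (σ : ℝ) (hσ : 1 ≤ σ)
    (a : Fin m → Fin n → ℝ)
    (hunit : ∀ i, ∑ j, a i j ^ 2 = 1)
    (hdict : ∀ u : Fin n → ℝ, ∑ i, (∑ j, a i j * u j) ^ 2 ≤ σ * ∑ j, u j ^ 2)
    (d : ℕ) (hd4 : 4 ≤ d) (hde : Even d)
    (k : ℕ) (hk : 0 < k) (hdvd : (d - 2) ∣ k)
    (K : ℕ) (hK : k + 2 * k / (d - 2) ≤ K)
    (L : MvPolynomial (Fin n) ℝ → ℝ)
    (hL : IsPseudoExpectation n K L)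
    (hc : SatisfiesZero n K L ((∑ j, X j ^ 2) - 1)) :
    L ((∑ i, (∑ j, C (a i j) * X j) ^ d) ^ (k / (d - 2))) ≤
      σ ^ (k / (d - 2)) * L (∑ i, (∑ j, C (a i j) * X j) ^ k) := by
  obtain ⟨t, rfl⟩ := hdvd
  obtain ⟨r, hr⟩ := hde
  have he : 1 ≤ r - 1 := by omega
  set e := r - 1 with he'
  have hd : d = 2 * e + 2 := by omega
  have hd2 : d - 2 = 2 * e := by omega
  have ht : 1 ≤ t := by
    rcases Nat.eq_zero_or_pos t with rfl | h
    · simp at hk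
    · exact h
  have hdiv : (d - 2) * t / (d - 2) = t := Nat.mul_div_cancel_left t (by omega)
  rw [hdiv, hd2, hd]
  have hassoc : 2 * e * t = 2 * (e * t) := by ring
  rw [hassoc]
  have hvdeg : ∀ i, (∑ j, C (a i j) * X j : Pol n).totalDegree ≤ 1 := fun i =>
    totalDegree_finsetSum_le fun j _ => (totalDegree_mul _ _).trans
      (by simp [totalDegree_C, totalDegree_X])
  have cert := main_cert σ hσ (fun i => ∑ j, C (a i j) * X j) hvdeg
    (cert_dict σ a hdict) (fun i => cert_unit a i (hunit i)) e t he ht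
  have hdd : 2 * ((d - 2) * t) / (d - 2) = 2 * t := by
    rw [show 2 * ((d - 2) * t) = (d - 2) * (2 * t) by ring,
      Nat.mul_div_cancel_left _ (show 0 < d - 2 by omega)]
  have hKK : (2 * e + 2) * t ≤ K := by
    rw [hdd] at hK
    calc (2 * e + 2) * t = (d - 2) * t + 2 * t := by rw [hd2]; ring
      _ ≤ K := hK
  have certK := cert.mono hKK
  have hc' : SatisfiesZero n K L (Sph n) := hc
  have h0 := cert_nonneg hL hc' certK
  obtain ⟨Ladd, Lsmul, -, -⟩ := hL
  have hLsub : L (σ ^ t • (∑ i, (fun i => ∑ j, C (a i j) * X j) i ^ (2 * (e * t)))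
        - (∑ i, (fun i => ∑ j, C (a i j) * X j) i ^ (2 * e + 2)) ^ t)
      = σ ^ t * L (∑ i, (∑ j, C (a i j) * X j) ^ (2 * (e * t)))
        - L ((∑ i, (∑ j, C (a i j) * X j) ^ (2 * e + 2)) ^ t) := by
    rw [sub_eq_add_neg, Ladd]
    rw [show -((∑ i, (∑ j, C (a i j) * X j) ^ (2 * e + 2) : Pol n) ^ t)
        = (-1 : ℝ) • ((∑ i, (∑ j, C (a i j) * X j) ^ (2 * e + 2) : Pol n) ^ t) from
      (neg_one_smul ℝ _).symm]
    rw [Lsmul, Lsmul]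
    ring
  rw [hLsub] at h0
  linarith
end

section
/- Let α and β be polynomials in ℝ[u₁,…,u_n] such that α is a sum of squares and β − α is a sum of squares. Let k ≥ 1 be an integer and τ > 0 a real number with (1+k)·τ ≤ 1/2. Then the polynomial (1 + 2(1+k)τ)·α·β^k + τ^{k+1}·β^{k+1} − (α + τ·β)^{1+k} is a sum of squares. -/
open MvPolynomial Finset

section SOSLemmas
variable {R : Type*} [CommSemiring R]

theorem IsSumSq.sq_mul' (x : R) {b : R} (hb : IsSumSq b) : IsSumSq (x * x * b) := by
  induction hb with
  | zero => simpa using IsSumSq.zero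
  | @sq_add y T pT ih2 =>
    have h2 : x * x * (y * y + T) = (x * y) * (x * y) + x * x * T := by ring
    rw [h2]; exact IsSumSq.sq_add _ ih2

theorem IsSumSq.mul' {a b : R} (ha : IsSumSq a) (hb : IsSumSq b) : IsSumSq (a * b) := by
  induction ha with
  | zero => simpa using IsSumSq.zero
  | @sq_add x S pS ih =>
    have h : (x * x + S) * b = x * x * b + S * b := by ring
    rw [h]
    exact (IsSumSq.sq_mul' x hb).add ih

theorem IsSumSq.pow' {a : R} (ha : IsSumSq a) (n : ℕ) : IsSumSq (a ^ n) := by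
  induction n with
  | zero =>
    have : (a : R) ^ 0 = 1 * 1 + 0 := by ring
    rw [this]; exact IsSumSq.sq_add _ IsSumSq.zero
  | succ n ih => rw [pow_succ]; exact ih.mul' ha

theorem IsSumSq.finsetSum {ι : Type*} (s : Finset ι) (f : ι → R)
    (h : ∀ i ∈ s, IsSumSq (f i)) : IsSumSq (∑ i ∈ s, f i) := by
  induction s using Finset.cons_induction with
  | empty => simpa using IsSumSq.zero
  | cons i s his ih =>
    rw [Finset.sum_cons]
    exact (h i (Finset.mem_cons_self i s)).add (ih fun j hj => h j (Finset.mem_cons_of_mem hj))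

end SOSLemmas

theorem isSOS_iff_isSumSq {σ : Type*} (p : MvPolynomial σ ℝ) : IsSOS p ↔ IsSumSq p := by
  constructor
  · rintro ⟨r, q, rfl⟩
    simp_rw [sq]
    exact IsSumSq.sum_mul_self _ _
  · intro h
    induction h with
    | zero => exact ⟨0, ![], by simp⟩
    | @sq_add a S pS ih =>
      obtain ⟨r, q, rfl⟩ := ih
      exact ⟨r + 1, Fin.cons a q, by rw [Fin.sum_univ_succ]; simp [sq]⟩

theorem isSumSq_C' {σ : Type*} {c : ℝ} (hc : 0 ≤ c) : IsSumSq (C c : MvPolynomial σ ℝ) := by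
  have h : (C c : MvPolynomial σ ℝ) = C (Real.sqrt c) * C (Real.sqrt c) + 0 := by
    rw [← C_mul, Real.mul_self_sqrt hc, add_zero]
  rw [h]; exact IsSumSq.sq_add _ IsSumSq.zero

theorem aux_ineq16 (k : ℕ) (τ : ℝ) (hτ : 0 < τ) (hkτ : (1 + (k : ℝ)) * τ ≤ 1 / 2) :
    ∑ j ∈ Finset.range (k + 1), ((k + 1).choose (j + 1) : ℝ) * τ ^ (k - j)
      ≤ 1 + 2 * (1 + (k : ℝ)) * τ := by
  have hτ2 : τ ≤ 1 / 2 := by nlinarith [Nat.cast_nonneg (α := ℝ) k]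
  have h1 : ∑ j ∈ Finset.range (k + 1), ((k + 1).choose (j + 1) : ℝ) * τ ^ (k - j)
      = ∑ j ∈ Finset.range (k + 1), ((k + 1).choose j : ℝ) * τ ^ j := by
    rw [← Finset.sum_range_reflect (fun j => ((k + 1).choose j : ℝ) * τ ^ j) (k + 1)]
    apply Finset.sum_congr rfl
    intro j hj
    rw [Finset.mem_range] at hj
    have e1 : k + 1 - 1 - j = k - j := by omega
    have e2 : (k + 1).choose (k - j) = (k + 1).choose (j + 1) := by
      rw [show k - j = (k + 1) - (j + 1) from by omega, Nat.choose_symm (by omega)]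
    rw [e1, e2]
  rw [h1]
  have h2 : ∑ j ∈ Finset.range (k + 1), ((k + 1).choose j : ℝ) * τ ^ j ≤ (1 + τ) ^ (k + 1) := by
    have hb : (1 + τ) ^ (k + 1)
        = (∑ j ∈ Finset.range (k + 1), ((k + 1).choose j : ℝ) * τ ^ j) + τ ^ (k + 1) := by
      rw [show (1 + τ) = (τ + 1) by ring, add_pow, Finset.sum_range_succ]
      simp only [one_pow, mul_one, Nat.choose_self, Nat.cast_one]
      congr 1
      exact Finset.sum_congr rfl fun j _ => by ring
    rw [hb]
    nlinarith [pow_pos hτ (k + 1)]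
  refine h2.trans ?_
  have hB : (1 : ℝ) - (1 + (k : ℝ)) * τ ≤ (1 - τ) ^ (k + 1) := by
    have h := one_add_mul_le_pow (a := -τ) (by linarith) (k + 1)
    have e : (1 : ℝ) + (k + 1 : ℕ) * (-τ) = 1 - (1 + (k : ℝ)) * τ := by push_cast; ring
    rw [e] at h
    rw [show (1 : ℝ) + -τ = 1 - τ by ring] at h
    exact h
  have hC : (1 - τ) ^ (k + 1) * (1 + τ) ^ (k + 1) ≤ 1 := by
    rw [← mul_pow]
    apply pow_le_one₀ (by nlinarith) (by nlinarith)
  have hA0 : (0 : ℝ) < (1 + τ) ^ (k + 1) := by positivity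
  have hABound : (1 + τ) ^ (k + 1) * (1 - (1 + (k : ℝ)) * τ) ≤ 1 := by
    calc (1 + τ) ^ (k + 1) * (1 - (1 + (k : ℝ)) * τ)
        ≤ (1 + τ) ^ (k + 1) * (1 - τ) ^ (k + 1) := mul_le_mul_of_nonneg_left hB hA0.le
      _ ≤ 1 := by rw [mul_comm]; exact hC
  have hm : (0 : ℝ) < 1 + (k : ℝ) := by positivity
  nlinarith [hABound, mul_pos hm hτ, mul_pos (mul_pos hm hτ) (mul_pos hm hτ)]

/-- If `0 ⪯ α ⪯ β` (sums of squares), `k ≥ 1` and `(1+k)τ ≤ 1/2` with `τ > 0`, then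
`(α + τβ)^{1+k} ⪯ (1 + 2(1+k)τ) α β^k + τ^{k+1} β^{k+1}`. -/
theorem stmt16 {σT : Type*} (α β : MvPolynomial σT ℝ)
    (hα : IsSOS α) (hβα : IsSOS (β - α))
    (k : ℕ) (hk : 1 ≤ k) (τ : ℝ) (hτ : 0 < τ)
    (hkτ : (1 + (k : ℝ)) * τ ≤ 1 / 2) :
    IsSOS (C (1 + 2 * (1 + (k : ℝ)) * τ) * α * β ^ k + C (τ ^ (k + 1)) * β ^ (k + 1)
      - (α + C τ * β) ^ (1 + k)) := by
  rw [isSOS_iff_isSumSq] at hα hβα ⊢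
  have hβ : IsSumSq β := by
    have := hβα.add hα
    rwa [sub_add_cancel] at this
  -- each mixed deficit term is a sum of squares
  have hT : ∀ j, j ≤ k → IsSumSq (α * β ^ k - α ^ (j + 1) * β ^ (k - j)) := by
    intro j hj
    have hsplit : β ^ k = β ^ (k - j) * β ^ j := by
      rw [← pow_add, Nat.sub_add_cancel hj]
    have heq : α * β ^ k - α ^ (j + 1) * β ^ (k - j)
        = (α * β ^ (k - j)) * ((∑ i ∈ Finset.range j, β ^ i * α ^ (j - 1 - i)) * (β - α)) := by
      rw [geom_sum₂_mul, hsplit]; ring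
    rw [heq]
    exact (hα.mul' (hβ.pow' _)).mul'
      ((IsSumSq.finsetSum _ _ fun i _ => (hβ.pow' i).mul' (hα.pow' _)).mul' hβα)
  set c : ℝ := (1 + 2 * (1 + (k : ℝ)) * τ)
      - ∑ j ∈ Finset.range (k + 1), ((k + 1).choose (j + 1) : ℝ) * τ ^ (k - j) with hc_def
  have hc : 0 ≤ c := by
    have := aux_ineq16 k τ hτ hkτ
    rw [hc_def]; linarith
  have hpow : (α + C τ * β) ^ (1 + k)
      = ∑ j ∈ Finset.range (k + 1),
          C (((k + 1).choose (j + 1) : ℝ) * τ ^ (k - j)) * (α ^ (j + 1) * β ^ (k - j))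
        + C (τ ^ (k + 1)) * β ^ (k + 1) := by
    rw [show 1 + k = k + 1 from by omega, add_pow, Finset.sum_range_succ']
    congr 1
    · apply Finset.sum_congr rfl
      intro j hj
      rw [Finset.mem_range] at hj
      have e : k + 1 - (j + 1) = k - j := by omega
      rw [e, mul_pow, ← C_pow, ← C_eq_coe_nat, C_mul]
      ring
    · rw [Nat.sub_zero, Nat.choose_zero_right, mul_pow, ← C_pow]
      push_cast
      ring
  have hCc : (C c : MvPolynomial σT ℝ)
      = C (1 + 2 * (1 + (k : ℝ)) * τ)
        - ∑ j ∈ Finset.range (k + 1), C (((k + 1).choose (j + 1) : ℝ) * τ ^ (k - j)) := by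
    rw [hc_def, map_sub, map_sum]
  have key : C (1 + 2 * (1 + (k : ℝ)) * τ) * α * β ^ k + C (τ ^ (k + 1)) * β ^ (k + 1)
      - (α + C τ * β) ^ (1 + k)
      = C c * (α * β ^ k)
        + ∑ j ∈ Finset.range (k + 1),
            C (((k + 1).choose (j + 1) : ℝ) * τ ^ (k - j))
              * (α * β ^ k - α ^ (j + 1) * β ^ (k - j)) := by
    rw [hpow, hCc]
    simp only [mul_sub, Finset.sum_sub_distrib, ← Finset.sum_mul]
    ring
  rw [key]
  refine ((isSumSq_C' hc).mul' (hα.mul' (hβ.pow' k))).add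
    (IsSumSq.finsetSum _ _ fun j hj => ?_)
  rw [Finset.mem_range] at hj
  exact (isSumSq_C' (by positivity)).mul' (hT j (by omega))
end

section
/- Let c ∈ ℝⁿ be a unit vector, let k ≥ 1 be an integer, and let ε > 0 and τ ∈ (0,1) satisfy (1+k)·τ ≤ 1/2. Let L be a degree-2(1+2k) pseudoexpectation on ℝ[u₁,…,u_n] that satisfies the constraint {‖u‖₂² = 1}, and suppose L(⟨c,u⟩^{2(1+2k)}) ≥ e^{−εk}·L(⟨c,u⟩²) and L(⟨c,u⟩²) ≥ τ^k. Let W̄ ∈ ℝ[u₁,…,u_n] be a polynomial such that W̄ − ⟨c,u⟩^{2(1+k)} is a sum of squares and (⟨c,u⟩² + τ·‖u‖₂²)^{1+k} − W̄ is a sum of squares. Then L(W̄·⟨c,u⟩^{2k}) ≥ e^{−εk − 2(2+k)τ}·L(W̄). -/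
open MvPolynomial

section lemmas
variable {σ : Type*}

lemma sos_sq (p : MvPolynomial σ ℝ) : IsSOS (p ^ 2) :=
  ⟨1, fun _ => p, by simp⟩

lemma sos_add {p q : MvPolynomial σ ℝ} (hp : IsSOS p) (hq : IsSOS q) : IsSOS (p + q) := by
  obtain ⟨r, a, rfl⟩ := hp
  obtain ⟨s, b, rfl⟩ := hq
  refine ⟨r + s, Fin.append a b, ?_⟩
  rw [Fin.sum_univ_add]
  simp [Fin.append]

lemma sos_mul {p q : MvPolynomial σ ℝ} (hp : IsSOS p) (hq : IsSOS q) : IsSOS (p * q) := by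
  obtain ⟨r, a, rfl⟩ := hp
  obtain ⟨s, b, rfl⟩ := hq
  refine ⟨r * s, fun i => a (finProdFinEquiv.symm i).1 * b (finProdFinEquiv.symm i).2, ?_⟩
  rw [Finset.sum_mul_sum, ← finProdFinEquiv.sum_comp]
  simp [Fintype.sum_prod_type, mul_pow]

lemma sos_sum {ι : Type*} (s : Finset ι) (f : ι → MvPolynomial σ ℝ)
    (h : ∀ i ∈ s, IsSOS (f i)) : IsSOS (∑ i ∈ s, f i) := by
  classical
  induction s using Finset.induction with
  | empty => exact ⟨0, fun i => 0, by simp⟩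
  | insert x s hx ih =>
    rw [Finset.sum_insert hx]
    exact sos_add (h _ (Finset.mem_insert_self _ _))
      (ih fun i hi => h i (Finset.mem_insert_of_mem hi))

lemma sos_pow {p : MvPolynomial σ ℝ} (hp : IsSOS p) (m : ℕ) : IsSOS (p ^ (m + 1)) := by
  induction m with
  | zero => simpa using hp
  | succ m ih => rw [pow_succ]; exact sos_mul ih hp

lemma sos_one {σ : Type*} : IsSOS (1 : MvPolynomial σ ℝ) := ⟨1, fun _ => 1, by simp⟩

lemma sos_pow' {σ : Type*} {p : MvPolynomial σ ℝ} (hp : IsSOS p) (t : ℕ) : IsSOS (p ^ t) := by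
  cases t with
  | zero => simpa using sos_one
  | succ m => exact sos_pow hp m

/-- a sum of squares that is zero has all terms zero -/
lemma sq_sum_eq_zero {r : ℕ} {q : Fin r → MvPolynomial σ ℝ}
    (h : ∑ i, q i ^ 2 = 0) (i : Fin r) : q i = 0 := by
  have hev : ∀ x : σ → ℝ, eval x (q i) = 0 := by
    intro x
    have h0 : ∑ j, (eval x (q j)) ^ 2 = 0 := by
      have := congrArg (eval x) h
      simpa using this
    have := (Finset.sum_eq_zero_iff_of_nonneg (fun j _ => sq_nonneg (eval x (q j)))).1 h0 i
      (Finset.mem_univ i)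
    exact (pow_eq_zero_iff two_ne_zero).1 this
  have : q i = (0 : MvPolynomial σ ℝ) := MvPolynomial.funext (by simpa using hev)
  exact this

lemma hc_totalDegree_ne_zero {p : MvPolynomial σ ℝ} (hp : p ≠ 0) :
    homogeneousComponent p.totalDegree p ≠ 0 := by
  obtain ⟨d, hd, hde⟩ := p.support.exists_mem_eq_sup
    (Finset.nonempty_iff_ne_empty.mpr (mt MvPolynomial.support_eq_empty.mp hp)) (fun s => s.sum fun _ e => e)
  intro h0
  have hcoeff : coeff d (homogeneousComponent p.totalDegree p) = coeff d p := by
    rw [coeff_homogeneousComponent, if_pos]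
    rw [totalDegree, hde]
    rfl
  rw [h0] at hcoeff
  exact (mem_support_iff.1 hd) hcoeff.symm

/-- key: each square in an SOS decomposition has degree bounded by the total -/
lemma sos_degree_le {r : ℕ} {q : Fin r → MvPolynomial σ ℝ} {S : MvPolynomial σ ℝ}
    (hS : S = ∑ i, q i ^ 2) (i : Fin r) :
    2 * (q i).totalDegree ≤ S.totalDegree := by
  by_contra hlt
  push_neg at hlt
  have hne : (Finset.univ : Finset (Fin r)).Nonempty := ⟨i, Finset.mem_univ i⟩
  obtain ⟨i0, _, hi0⟩ := Finset.exists_mem_eq_sup Finset.univ hne fun j => (q j).totalDegree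
  set m := (q i0).totalDegree with hm
  have him : ∀ j, (q j).totalDegree ≤ m := fun j => by
    rw [← hi0]
    exact Finset.le_sup (f := fun j => (q j).totalDegree) (Finset.mem_univ j)
  have hSm : S.totalDegree < 2 * m := lt_of_lt_of_le hlt (by have := him i; omega)
  have hmpos : 1 ≤ m := by have := him i; omega
  -- homogeneous component of degree 2m of S is zero
  have hz : homogeneousComponent (2 * m) S = 0 := homogeneousComponent_eq_zero _ _ hSm
  -- but it equals the sum of squares of top components
  have hq : ∀ j : Fin r, homogeneousComponent (2 * m) (q j ^ 2) =
      (homogeneousComponent m (q j)) ^ 2 := by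
    intro j
    set h := homogeneousComponent m (q j) with hh
    set rr := q j - h with hr
    have hdeg : (q j).totalDegree ≤ m := him j
    have hhhom : h.IsHomogeneous m := homogeneousComponent_isHomogeneous m (q j)
    have hdr : rr.totalDegree < m ∨ rr = 0 := by
      by_cases h0 : rr = 0
      · exact Or.inr h0
      · left
        have hdle : rr.totalDegree ≤ m :=
          le_trans (totalDegree_sub _ _) (max_le hdeg hhhom.totalDegree_le)
        rcases lt_or_eq_of_le hdle with h' | h'
        · exact h'
        · exfalso
          have : homogeneousComponent m rr = 0 := by
            rw [hr, map_sub, hh, homogeneousComponent_of_mem (homogeneousComponent_mem m (q j))]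
            simp
          rw [← h'] at this
          exact hc_totalDegree_ne_zero h0 this
    have hq2 : q j ^ 2 = h ^ 2 + (h * rr + rr * h + rr ^ 2) := by rw [hr]; ring
    rw [hq2, map_add, map_add, map_add]
    have h1 : homogeneousComponent (2 * m) (h ^ 2) = h ^ 2 := by
      have : (h ^ 2).IsHomogeneous (2 * m) := by
        have := hhhom.mul hhhom
        rw [← pow_two] at this
        convert this using 1
        omega
      rw [homogeneousComponent_of_mem ((mem_homogeneousSubmodule _ _).2 this), if_pos rfl]
    rcases hdr with hdr | hdr
    · have hz1 : homogeneousComponent (2 * m) (h * rr) = 0 := by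
        apply homogeneousComponent_eq_zero
        calc (h * rr).totalDegree ≤ h.totalDegree + rr.totalDegree := totalDegree_mul _ _
        _ < m + m := by
            have := hhhom.totalDegree_le
            omega
        _ = 2 * m := by omega
      have hz2 : homogeneousComponent (2 * m) (rr * h) = 0 := by
        apply homogeneousComponent_eq_zero
        calc (rr * h).totalDegree ≤ rr.totalDegree + h.totalDegree := totalDegree_mul _ _
        _ < m + m := by
            have := hhhom.totalDegree_le
            omega
        _ = 2 * m := by omega
      have hz3 : homogeneousComponent (2 * m) (rr ^ 2) = 0 := by
        apply homogeneousComponent_eq_zero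
        calc (rr ^ 2).totalDegree ≤ 2 * rr.totalDegree := totalDegree_pow _ _
        _ < 2 * m := by omega
      rw [h1, hz1, hz2, hz3]; ring
    · rw [hdr, h1]; simp
  have hsum : (0 : MvPolynomial σ ℝ) = ∑ j, (homogeneousComponent m (q j)) ^ 2 := by
    rw [← hz, hS, map_sum]
    exact Finset.sum_congr rfl fun j _ => hq j
  have hall : ∀ j : Fin r, homogeneousComponent m (q j) = 0 :=
    fun j => sq_sum_eq_zero hsum.symm j
  -- i0 attains the sup m, so q i0 has totalDegree m with nonzero top component
  have hqi0 : q i0 ≠ 0 := by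
    intro h0
    rw [h0, totalDegree_zero] at hm
    omega
  exact hc_totalDegree_ne_zero hqi0 (hall i0)
end lemmas

set_option maxHeartbeats 1000000 in
/-- Refined reweighing: for a unit vector `c`, a degree-`2(1+2k)` pseudoexpectation `L`
satisfying `{‖u‖₂² = 1}` with `L ⟨c,u⟩^{2(1+2k)} ≥ e^{-εk} L ⟨c,u⟩²` and
`L ⟨c,u⟩² ≥ τ^k`, and any `W̄` with `⟨c,u⟩^{2(1+k)} ⪯ W̄ ⪯ (⟨c,u⟩² + τ‖u‖₂²)^{1+k}`,
we have `L (W̄ ⟨c,u⟩^{2k}) ≥ e^{-εk - 2(2+k)τ} L W̄`. -/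
theorem stmt17 (n : ℕ) (c : Fin n → ℝ) (hc : ∑ j, c j ^ 2 = 1)
    (k : ℕ) (hk : 1 ≤ k) (ε τ : ℝ) (hε : 0 < ε) (hτ0 : 0 < τ) (hτ1 : τ < 1)
    (hkτ : (1 + (k : ℝ)) * τ ≤ 1 / 2)
    (L : MvPolynomial (Fin n) ℝ → ℝ)
    (hL : IsPseudoExpectation n (2 * (1 + 2 * k)) L)
    (hconstr : SatisfiesZero n (2 * (1 + 2 * k)) L ((∑ j, X j ^ 2) - 1))
    (h1 : Real.exp (-(ε * k)) * L ((∑ j, C (c j) * X j) ^ 2) ≤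
      L ((∑ j, C (c j) * X j) ^ (2 * (1 + 2 * k))))
    (h2 : τ ^ k ≤ L ((∑ j, C (c j) * X j) ^ 2))
    (Wbar : MvPolynomial (Fin n) ℝ)
    (hW1 : IsSOS (Wbar - (∑ j, C (c j) * X j) ^ (2 * (1 + k))))
    (hW2 : IsSOS (((∑ j, C (c j) * X j) ^ 2 + C τ * ∑ j, X j ^ 2) ^ (1 + k) - Wbar)) :
    Real.exp (-(ε * k) - 2 * (2 + k) * τ) * L Wbar ≤
      L (Wbar * (∑ j, C (c j) * X j) ^ (2 * k)) := by
  obtain ⟨hadd, hsmul, hone, hpos⟩ := hL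
  set v : MvPolynomial (Fin n) ℝ := ∑ j, C (c j) * X j with hvdef
  set u2 : MvPolynomial (Fin n) ℝ := ∑ j, X j ^ 2 with hu2def
  set D : ℕ := 2 * (1 + 2 * k) with hD
  clear_value v u2 D
  -- bundled linear map
  let Lm : MvPolynomial (Fin n) ℝ →ₗ[ℝ] ℝ :=
    { toFun := L, map_add' := hadd, map_smul' := fun m x => by simpa using hsmul m x }
  have hLm : ∀ p, Lm p = L p := fun p => rfl
  -- degree bounds
  have hv1 : v.totalDegree ≤ 1 := by
    rw [hvdef]
    refine (totalDegree_finset_sum _ _).trans (Finset.sup_le fun j _ => ?_)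
    refine (totalDegree_mul _ _).trans ?_
    simp [totalDegree_X, totalDegree_C]
  have hu21 : u2.totalDegree ≤ 2 := by
    rw [hu2def]
    refine (totalDegree_finset_sum _ _).trans (Finset.sup_le fun j _ => ?_)
    refine (totalDegree_pow _ _).trans ?_
    simp [totalDegree_X]
  have hvp : ∀ m : ℕ, (v ^ m).totalDegree ≤ m := fun m =>
    (totalDegree_pow _ _).trans (by nlinarith [hv1])
  have hu2p : ∀ m : ℕ, (u2 ^ m).totalDegree ≤ 2 * m := fun m =>
    (totalDegree_pow _ _).trans (by nlinarith [hu21])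
  -- SOS positivity
  have hLS : ∀ S : MvPolynomial (Fin n) ℝ, IsSOS S → S.totalDegree ≤ D → 0 ≤ L S := by
    rintro S ⟨r, q, hSq⟩ hdeg
    rw [hSq, ← hLm, map_sum]
    refine Finset.sum_nonneg fun i _ => ?_
    rw [hLm]
    refine hpos (q i) ?_
    have h1 := sos_degree_le hSq i
    have h2 := totalDegree_pow (q i) 2
    omega
  -- constraint lemma, one step
  have hstep : ∀ Q : MvPolynomial (Fin n) ℝ, Q.totalDegree + 2 ≤ D → L (u2 * Q) = L Q := by
    intro Q hQ
    have hd : ((u2 - 1) * Q).totalDegree ≤ D := by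
      refine (totalDegree_mul _ _).trans ?_
      have := (totalDegree_sub u2 (1 : MvPolynomial (Fin n) ℝ)).trans
        (max_le hu21 (by simp [totalDegree_one]))
      omega
    have h0 := hconstr Q hd
    have he : (u2 - 1) * Q = u2 * Q - Q := by ring
    rw [he] at h0
    have hs := map_sub Lm (u2 * Q) Q
    simp only [hLm] at hs
    rw [hs] at h0
    linarith
  -- constraint lemma, iterated
  have hcm : ∀ (m : ℕ) (Q : MvPolynomial (Fin n) ℝ), Q.totalDegree + 2 * m ≤ D →
      L (u2 ^ m * Q) = L Q := by
    intro m
    induction m with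
    | zero => intro Q _; rw [pow_zero, one_mul]
    | succ m ih =>
      intro Q hQ
      have h1 : u2 ^ (m + 1) * Q = u2 ^ m * (u2 * Q) := by ring
      rw [h1, ih (u2 * Q) ?_, hstep Q (by omega)]
      have := totalDegree_mul u2 Q
      omega
  -- decompositions
  obtain ⟨r1, p, hS1⟩ := hW1
  obtain ⟨r2, q, hS2⟩ := hW2
  -- the combined polynomial T
  set E : MvPolynomial (Fin n) ℝ := (v ^ 2 + C τ * u2) ^ (1 + k) with hE
  have hEdeg : E.totalDegree ≤ 2 * (1 + k) := by
    refine (totalDegree_pow _ _).trans ?_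
    have h' : (v ^ 2 + C τ * u2).totalDegree ≤ 2 := by
      refine (totalDegree_add _ _).trans (max_le (hvp 2) ?_)
      refine (totalDegree_mul _ _).trans ?_
      have := totalDegree_C (σ := Fin n) τ
      omega
    nlinarith
  have hTeq : E - v ^ (2 * (1 + k)) = ∑ i : Fin (r1 + r2), (Fin.append p q i) ^ 2 := by
    rw [Fin.sum_univ_add]
    simp only [Fin.append_left, Fin.append_right]
    rw [← hS1, ← hS2]
    ring
  have hTdeg : (E - v ^ (2 * (1 + k))).totalDegree ≤ 2 * (1 + k) :=
    (totalDegree_sub _ _).trans (max_le hEdeg (hvp _))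
  have hpdeg : ∀ i : Fin r1, (p i).totalDegree ≤ 1 + k := by
    intro i
    have h' := sos_degree_le hTeq (Fin.castAdd r2 i)
    rw [Fin.append_left] at h'
    omega
  have hqdeg : ∀ i : Fin r2, (q i).totalDegree ≤ 1 + k := by
    intro i
    have h' := sos_degree_le hTeq (Fin.natAdd r1 i)
    rw [Fin.append_right] at h'
    omega
  -- F2 : lower bound for L (Wbar * v^{2k})
  have hWv : Wbar * v ^ (2 * k) = v ^ D + ∑ i : Fin r1, (p i * v ^ k) ^ 2 := by
    have hW : Wbar = v ^ (2 * (1 + k)) + ∑ i : Fin r1, (p i) ^ 2 := by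
      rw [← hS1]; ring
    rw [hW, add_mul, Finset.sum_mul, ← pow_add]
    have he : 2 * (1 + k) + 2 * k = D := by omega
    rw [he]
    congr 1
    refine Finset.sum_congr rfl fun i _ => ?_
    rw [mul_pow, ← pow_mul]
    ring_nf
  have hF2 : L (v ^ D) ≤ L (Wbar * v ^ (2 * k)) := by
    rw [hWv, hadd]
    have hsum : L (∑ i : Fin r1, (p i * v ^ k) ^ 2) = ∑ i : Fin r1, L ((p i * v ^ k) ^ 2) := by
      rw [← hLm, map_sum]
      simp only [hLm]
    have hterm : ∀ i : Fin r1, 0 ≤ L ((p i * v ^ k) ^ 2) := by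
      intro i
      refine hpos _ ?_
      have hd1 := totalDegree_mul (p i) (v ^ k)
      have hd2 := totalDegree_pow (p i * v ^ k) 2
      have := hpdeg i
      have := hvp k
      omega
    have := Finset.sum_nonneg fun i (_ : i ∈ Finset.univ) => hterm i
    linarith [hsum]
  -- F3 : L Wbar ≤ L E
  have hF3 : L Wbar ≤ L E := by
    have h0 : 0 ≤ L (E - Wbar) := by
      refine hLS _ ⟨r2, q, hS2⟩ ?_
      rw [hS2]
      refine (totalDegree_finset_sum _ _).trans (Finset.sup_le fun i _ => ?_)
      have := totalDegree_pow (q i) 2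
      have := hqdeg i
      omega
    have hs := map_sub Lm E Wbar
    simp only [hLm] at hs
    rw [hs] at h0
    linarith
  -- identity : u2 - v^2 is a sum of squares
  have e1 : (∑ j, (C (c j) : MvPolynomial (Fin n) ℝ) ^ 2) = 1 := by
    have he : (∑ j, (C (c j) : MvPolynomial (Fin n) ℝ) ^ 2) = C (∑ j, (c j) ^ 2) := by
      rw [map_sum]
      exact Finset.sum_congr rfl fun j _ => (map_pow C (c j) 2).symm
    rw [he, hc, map_one]
  have hid : (∑ j, (X j - C (c j) * v) ^ 2) = u2 - v ^ 2 := by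
    calc (∑ j, (X j - C (c j) * v) ^ 2)
        = ∑ j, (X j ^ 2 - 2 * (C (c j) * X j) * v + (C (c j)) ^ 2 * v ^ 2) :=
          Finset.sum_congr rfl fun j _ => by ring
      _ = (∑ j, (X j : MvPolynomial (Fin n) ℝ) ^ 2) - 2 * (∑ j, C (c j) * X j) * v
            + (∑ j, (C (c j) : MvPolynomial (Fin n) ℝ) ^ 2) * v ^ 2 := by
          simp only [Finset.sum_add_distrib, Finset.sum_sub_distrib, ← Finset.sum_mul,
            ← Finset.mul_sum]
      _ = u2 - v ^ 2 := by rw [e1, ← hu2def, ← hvdef]; ring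
  have hsosuv : IsSOS (u2 - v ^ 2) := ⟨n, fun j => X j - C (c j) * v, hid.symm⟩
  have hsosu2 : IsSOS u2 := ⟨n, fun j => X j, hu2def⟩
  -- monotonicity : L (v^{2i}) ≤ L (v^2) for 1 ≤ i ≤ 1+k
  have hvmono : ∀ i : ℕ, 1 ≤ i → i ≤ 1 + k → L (v ^ (2 * i)) ≤ L (v ^ 2) := by
    intro i h1i h2i
    obtain ⟨m, rfl⟩ : ∃ m, i = m + 1 := ⟨i - 1, by omega⟩
    have heq : L (u2 ^ m * v ^ 2) = L (v ^ 2) := hcm m _ (by have := hvp 2; omega)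
    have hgeom : u2 ^ m - (v ^ 2) ^ m
        = (∑ t ∈ Finset.range m, u2 ^ t * (v ^ 2) ^ (m - 1 - t)) * (u2 - v ^ 2) :=
      (geom_sum₂_mul u2 (v ^ 2) m).symm
    have hsosS : IsSOS ((u2 ^ m - (v ^ 2) ^ m) * v ^ 2) := by
      rw [hgeom]
      refine sos_mul (sos_mul (sos_sum _ _ fun t _ => sos_mul (sos_pow' hsosu2 t) ?_) hsosuv)
        (sos_sq v)
      rw [pow_right_comm]
      exact sos_sq _
    have hdegS : ((u2 ^ m - (v ^ 2) ^ m) * v ^ 2).totalDegree ≤ D := by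
      refine (totalDegree_mul _ _).trans ?_
      have hd1 := (totalDegree_sub (u2 ^ m) ((v ^ 2) ^ m)).trans
        (max_le (hu2p m) ((totalDegree_pow _ _).trans (by have := hvp 2; nlinarith)))
      have := hvp 2
      omega
    have h0 : 0 ≤ L ((u2 ^ m - (v ^ 2) ^ m) * v ^ 2) := hLS _ hsosS hdegS
    have hpoly : (u2 ^ m - (v ^ 2) ^ m) * v ^ 2 = u2 ^ m * v ^ 2 - v ^ (2 * (m + 1)) := by
      rw [pow_mul]; ring
    have hs := map_sub Lm (u2 ^ m * v ^ 2) (v ^ (2 * (m + 1)))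
    simp only [hLm] at hs
    rw [hpoly, hs] at h0
    linarith
  -- expansion of L E
  have hEsum : E = ∑ i ∈ Finset.range (1 + k + 1),
      C ((Nat.choose (1 + k) i : ℝ) * τ ^ (1 + k - i)) * (v ^ (2 * i) * u2 ^ (1 + k - i)) := by
    rw [hE, add_pow]
    refine Finset.sum_congr rfl fun i hi => ?_
    rw [mul_pow, ← map_pow, ← pow_mul, map_mul,
      map_natCast (C : ℝ →+* MvPolynomial (Fin n) ℝ)]
    ring
  have hLE : L E = ∑ i ∈ Finset.range (1 + k + 1),
      ((Nat.choose (1 + k) i : ℝ) * τ ^ (1 + k - i)) * L (v ^ (2 * i)) := by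
    conv_lhs => rw [hEsum]
    rw [← hLm, map_sum]
    refine Finset.sum_congr rfl fun i hi => ?_
    rw [hLm, ← smul_eq_C_mul, hsmul, mul_comm (v ^ (2 * i)) (u2 ^ (1 + k - i)),
      hcm (1 + k - i) (v ^ (2 * i)) ?_]
    have := hvp (2 * i)
    have hi' := Finset.mem_range.1 hi
    omega
  -- positivity of L (v^2)
  have hLv2pos : 0 < L (v ^ 2) := lt_of_lt_of_le (pow_pos hτ0 k) h2
  -- binomial sum
  have hAsum : ∑ i ∈ Finset.range (1 + k + 1),
      ((Nat.choose (1 + k) i : ℝ) * τ ^ (1 + k - i)) = (1 + τ) ^ (1 + k) := by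
    rw [add_pow]
    exact Finset.sum_congr rfl fun i hi => by rw [one_pow]; ring
  have hAnn : ∀ i : ℕ, 0 ≤ (Nat.choose (1 + k) i : ℝ) * τ ^ (1 + k - i) := fun i => by positivity
  have htail : ∑ i ∈ Finset.range (1 + k),
      ((Nat.choose (1 + k) (i + 1) : ℝ) * τ ^ (1 + k - (i + 1))) ≤ (1 + τ) ^ (1 + k) := by
    rw [← hAsum, Finset.sum_range_succ']
    have := hAnn 0
    linarith
  -- combine
  have hLE2 : L E ≤ ((1 + τ) ^ (1 + k) + τ) * L (v ^ 2) := by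
    rw [hLE, Finset.sum_range_succ']
    have hstep1 : ∑ i ∈ Finset.range (1 + k),
        ((Nat.choose (1 + k) (i + 1) : ℝ) * τ ^ (1 + k - (i + 1))) * L (v ^ (2 * (i + 1)))
        ≤ (∑ i ∈ Finset.range (1 + k),
          ((Nat.choose (1 + k) (i + 1) : ℝ) * τ ^ (1 + k - (i + 1)))) * L (v ^ 2) := by
      rw [Finset.sum_mul]
      refine Finset.sum_le_sum fun i hi => ?_
      have hi' := Finset.mem_range.1 hi
      exact mul_le_mul_of_nonneg_left (hvmono (i + 1) (by omega) (by omega)) (hAnn _)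
    have hstep2 : (∑ i ∈ Finset.range (1 + k),
        ((Nat.choose (1 + k) (i + 1) : ℝ) * τ ^ (1 + k - (i + 1)))) * L (v ^ 2)
        ≤ (1 + τ) ^ (1 + k) * L (v ^ 2) :=
      mul_le_mul_of_nonneg_right htail hLv2pos.le
    have hstep3 : ((Nat.choose (1 + k) 0 : ℝ) * τ ^ (1 + k - 0)) * L (v ^ (2 * 0)) = τ ^ (1 + k) := by
      norm_num [hone]
    have hstep4 : τ ^ (1 + k) ≤ τ * L (v ^ 2) := by
      have hτk : τ ^ (1 + k) = τ * τ ^ k := by ring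
      rw [hτk]
      exact mul_le_mul_of_nonneg_left h2 hτ0.le
    rw [add_mul]
    linarith
  -- the purely real inequality
  have hfinal : (1 + τ) ^ (1 + k) + τ ≤ Real.exp (2 * (2 + (k : ℝ)) * τ) := by
    have he1 : (1 + τ : ℝ) ≤ Real.exp τ := by linarith [Real.add_one_le_exp τ]
    have he2 : (1 + τ) ^ (1 + k) ≤ Real.exp τ ^ (1 + k) := pow_le_pow_left₀ (by linarith) he1 (1 + k)
    have he3 : Real.exp τ ^ (1 + k) = Real.exp ((1 + (k : ℝ)) * τ) := by
      rw [← Real.exp_nat_mul]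
      congr 1
      push_cast
      ring
    have he4 : (1 : ℝ) ≤ Real.exp ((1 + (k : ℝ)) * τ) := Real.one_le_exp (by positivity)
    have he5 : 1 + (3 + (k : ℝ)) * τ ≤ Real.exp ((3 + (k : ℝ)) * τ) := by
      linarith [Real.add_one_le_exp ((3 + (k : ℝ)) * τ)]
    have he6 : Real.exp (2 * (2 + (k : ℝ)) * τ)
        = Real.exp ((1 + (k : ℝ)) * τ) * Real.exp ((3 + (k : ℝ)) * τ) := by
      rw [← Real.exp_add]
      congr 1
      ring
    have he7 : τ ≤ Real.exp ((1 + (k : ℝ)) * τ) * ((3 + (k : ℝ)) * τ) := by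
      have hp1 : 0 ≤ (Real.exp ((1 + (k : ℝ)) * τ) - 1) * ((3 + (k : ℝ)) * τ) :=
        mul_nonneg (by linarith) (by positivity)
      nlinarith [hp1, hτ0.le, Nat.cast_nonneg (α := ℝ) k]
    have he8 : Real.exp ((1 + (k : ℝ)) * τ) * (1 + (3 + (k : ℝ)) * τ)
        ≤ Real.exp ((1 + (k : ℝ)) * τ) * Real.exp ((3 + (k : ℝ)) * τ) :=
      mul_le_mul_of_nonneg_left he5 (Real.exp_nonneg _)
    nlinarith [he2, he3, he6, he8, he7, he4]
  -- final assembly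
  have hchain : L Wbar ≤ Real.exp (2 * (2 + (k : ℝ)) * τ) * L (v ^ 2) :=
    hF3.trans (hLE2.trans (mul_le_mul_of_nonneg_right hfinal hLv2pos.le))
  calc Real.exp (-(ε * k) - 2 * (2 + k) * τ) * L Wbar
      ≤ Real.exp (-(ε * k) - 2 * (2 + k) * τ) * (Real.exp (2 * (2 + (k : ℝ)) * τ) * L (v ^ 2)) :=
        mul_le_mul_of_nonneg_left hchain (Real.exp_nonneg _)
    _ = Real.exp (-(ε * k)) * L (v ^ 2) := by
        rw [← mul_assoc, ← Real.exp_add]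
        congr 2
        ring
    _ ≤ L (v ^ D) := h1
    _ ≤ L (Wbar * v ^ (2 * k)) := hF2
end

section
/- Let A be a σ-dictionary (σ ≥ 1) with columns a¹,…,a^m ∈ ℝⁿ, let k ≥ 1 be an integer and ε > 0, and set ε' = ε·e^{−2kε}. Let L be a degree-2(1+k) pseudoexpectation on ℝ[u₁,…,u_n] that satisfies the constraint {‖u‖₂² = 1}. If L(Σ_{i=1}^m ⟨aⁱ,u⟩^{2(1+k)}) > (1+ε)·e^{−2kε}·σ, then there exists a column c ∈ {a¹,…,a^m} such that both L(⟨c,u⟩^{2(1+k)}) ≥ e^{−2εk}·L(⟨c,u⟩²) and L(⟨c,u⟩²) ≥ ε'/m. -/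
open MvPolynomial

section Aux

variable {n : ℕ}

private lemma sq_sum' {R : Type*} [CommRing R] (f : Fin n → R) :
    (∑ j, f j) ^ 2 = ∑ j, ∑ j', f j * f j' := by
  rw [sq, Finset.sum_mul_sum]

/-- Expand the square of a linear polynomial. -/
private lemma expand_sq (c : Fin n → ℝ) :
    ((∑ j, C (c j) * X j : MvPolynomial (Fin n) ℝ)) ^ 2
      = ∑ j, ∑ j', C (c j * c j') * (X j * X j') := by
  rw [sq_sum']
  refine Finset.sum_congr rfl fun j _ => Finset.sum_congr rfl fun j' _ => ?_
  rw [map_mul]; ring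

/-- Expand a sum of squares of linear polynomials into a Gram quadratic form. -/
private lemma sum_sq_poly {m : ℕ} (g : Fin m → Fin n → ℝ) :
    (∑ j, ∑ j', C (∑ i, g i j * g i j') * (X j * X j') : MvPolynomial (Fin n) ℝ)
      = ∑ i, (∑ j, C (g i j) * X j) ^ 2 := by
  calc (∑ j, ∑ j', C (∑ i, g i j * g i j') * (X j * X j') : MvPolynomial (Fin n) ℝ)
      = ∑ j, ∑ j', ∑ i, C (g i j * g i j') * (X j * X j') := by
        refine Finset.sum_congr rfl fun j _ => Finset.sum_congr rfl fun j' _ => ?_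
        rw [map_sum, Finset.sum_mul]
    _ = ∑ j, ∑ i, ∑ j', C (g i j * g i j') * (X j * X j') := by
        exact Finset.sum_congr rfl fun j _ => Finset.sum_comm
    _ = ∑ i, ∑ j, ∑ j', C (g i j * g i j') * (X j * X j') := Finset.sum_comm
    _ = ∑ i, (∑ j, C (g i j) * X j) ^ 2 := by
        exact Finset.sum_congr rfl fun i _ => (expand_sq (g i)).symm

/-- Diagonal quadratic form. -/
private lemma diag_expand (c : ℝ) :
    (∑ j, ∑ j', C (if j = j' then c else (0:ℝ)) * (X j * X j') : MvPolynomial (Fin n) ℝ)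
      = C c * ∑ j, (X j) ^ 2 := by
  rw [Finset.mul_sum]
  refine Finset.sum_congr rfl fun j _ => ?_
  have : ∀ j' : Fin n, C (if j = j' then c else (0:ℝ)) * (X j * X j' : MvPolynomial (Fin n) ℝ)
      = if j = j' then C c * (X j * X j') else 0 := by
    intro j'; split <;> simp
  rw [Finset.sum_congr rfl fun j' _ => this j', Finset.sum_ite_eq]
  simp [sq]

private lemma scalar_diag (c : ℝ) (x : Fin n → ℝ) :
    ∑ j, ∑ j', x j * ((if j = j' then c else 0) * x j') = c * ∑ j, x j ^ 2 := by
  rw [Finset.mul_sum]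
  refine Finset.sum_congr rfl fun j _ => ?_
  have : ∀ j' : Fin n, x j * ((if j = j' then c else 0) * x j')
      = if j = j' then x j * (c * x j') else 0 := by
    intro j'; split <;> simp
  rw [Finset.sum_congr rfl fun j' _ => this j', Finset.sum_ite_eq]
  simp [sq]; ring

private lemma scalar_gram {m : ℕ} (g : Fin m → Fin n → ℝ) (x : Fin n → ℝ) :
    ∑ j, ∑ j', x j * ((∑ i, g i j * g i j') * x j') = ∑ i, (∑ j, g i j * x j) ^ 2 := by
  calc ∑ j, ∑ j', x j * ((∑ i, g i j * g i j') * x j')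
      = ∑ j, ∑ j', ∑ i, x j * (g i j * g i j' * x j') := by
        refine Finset.sum_congr rfl fun j _ => Finset.sum_congr rfl fun j' _ => ?_
        rw [Finset.sum_mul, Finset.mul_sum]
    _ = ∑ j, ∑ i, ∑ j', x j * (g i j * g i j' * x j') := by
        exact Finset.sum_congr rfl fun j _ => Finset.sum_comm
    _ = ∑ i, ∑ j, ∑ j', x j * (g i j * g i j' * x j') := Finset.sum_comm
    _ = ∑ i, (∑ j, g i j * x j) ^ 2 := by
        refine Finset.sum_congr rfl fun i _ => ?_
        rw [sq_sum']
        refine Finset.sum_congr rfl fun j _ => Finset.sum_congr rfl fun j' _ => ?_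
        ring

private lemma dot_quad (M : Matrix (Fin n) (Fin n) ℝ) (x : Fin n → ℝ) :
    dotProduct (star x) (M.mulVec x) = ∑ j, ∑ j', x j * (M j j' * x j') := by
  simp [dotProduct, Matrix.mulVec, Finset.mul_sum]

/-- A PSD quadratic form is a sum of squares of linear polynomials (degree ≤ 1 each). -/
private lemma quad_sos (M : Matrix (Fin n) (Fin n) ℝ) (hM : M.PosSemidef) :
    ∃ r : Fin n → MvPolynomial (Fin n) ℝ,
      (∀ l, (r l).totalDegree ≤ 1) ∧
      (∑ j, ∑ j', C (M j j') * (X j * X j') : MvPolynomial (Fin n) ℝ) = ∑ l, (r l) ^ 2 := by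
  obtain ⟨B, hB⟩ : ∃ B : Matrix (Fin n) (Fin n) ℝ, M = B.conjTranspose * B := by
    open scoped MatrixOrder in
    obtain ⟨X, hX, -, hXX⟩ := sub_zero M ▸
      CFC.exists_sqrt_of_isSelfAdjoint_of_quasispectrumRestricts hM.isHermitian
        (QuasispectrumRestricts.nnreal_of_nonneg hM.nonneg)
    exact ⟨X, by rw [sub_zero] at hXX; rw [← hXX, ← Matrix.star_eq_conjTranspose, hX.star_eq]⟩
  refine ⟨fun l => ∑ j, C (B l j) * X j, ?_, ?_⟩
  · intro l
    refine (totalDegree_finset_sum _ _).trans ?_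
    simp only [Finset.sup_le_iff]
    intro j _
    refine (totalDegree_mul _ _).trans ?_
    simp [totalDegree_X]
  · have hM' : ∀ j j', M j j' = ∑ l, B l j * B l j' := by
      intro j j'
      rw [hB]
      simp [Matrix.mul_apply, Matrix.conjTranspose_apply]
    calc (∑ j, ∑ j', C (M j j') * (X j * X j') : MvPolynomial (Fin n) ℝ)
        = ∑ j, ∑ j', C (∑ l, B l j * B l j') * (X j * X j') := by
          refine Finset.sum_congr rfl fun j _ => Finset.sum_congr rfl fun j' _ => ?_
          rw [hM']
      _ = ∑ l, (∑ j, C (B l j) * X j) ^ 2 := sum_sq_poly B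

end Aux

/-- If a degree-`2(1+k)` pseudoexpectation `L` satisfying `{‖u‖₂² = 1}` has
`L ‖Aᵀu‖_{2(1+k)}^{2(1+k)} > (1+ε) e^{-2kε} σ` for a `σ`-dictionary `A`, then some
column `c` satisfies `L ⟨c,u⟩^{2(1+k)} ≥ e^{-2εk} L ⟨c,u⟩²` and `L ⟨c,u⟩² ≥ ε'/m`
with `ε' = ε e^{-2kε}`. -/
theorem stmt18 (n m : ℕ) (hm : 0 < m) (σ : ℝ) (hσ : 1 ≤ σ)
    (a : Fin m → Fin n → ℝ)
    (hunit : ∀ i, ∑ j, a i j ^ 2 = 1)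
    (hdict : ∀ u : Fin n → ℝ, ∑ i, (∑ j, a i j * u j) ^ 2 ≤ σ * ∑ j, u j ^ 2)
    (k : ℕ) (hk : 1 ≤ k) (ε : ℝ) (hε : 0 < ε)
    (L : MvPolynomial (Fin n) ℝ → ℝ)
    (hL : IsPseudoExpectation n (2 * (1 + k)) L)
    (hconstr : SatisfiesZero n (2 * (1 + k)) L ((∑ j, X j ^ 2) - 1))
    (hbig : (1 + ε) * Real.exp (-(2 * k * ε)) * σ <
      L (∑ i, (∑ j, C (a i j) * X j) ^ (2 * (1 + k)))) :
    ∃ i : Fin m,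
      Real.exp (-(2 * ε * k)) * L ((∑ j, C (a i j) * X j) ^ 2) ≤
        L ((∑ j, C (a i j) * X j) ^ (2 * (1 + k))) ∧
      ε * Real.exp (-(2 * k * ε)) / m ≤ L ((∑ j, C (a i j) * X j) ^ 2) := by
  classical
  obtain ⟨hadd, hsmul, hone, hpos⟩ := hL
  set s : MvPolynomial (Fin n) ℝ := ∑ j, X j ^ 2 with hs_def
  set p : Fin m → MvPolynomial (Fin n) ℝ := fun i => ∑ j, C (a i j) * X j with hp_def
  -- linearity package
  let F : MvPolynomial (Fin n) ℝ →ₗ[ℝ] ℝ :=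
    { toFun := L, map_add' := hadd, map_smul' := by intro c P; simp [hsmul c P] }
  have hLsum : ∀ {ι : Type} (t : Finset ι) (f : ι → MvPolynomial (Fin n) ℝ),
      L (∑ i ∈ t, f i) = ∑ i ∈ t, L (f i) := fun t f => map_sum F f t
  have hLsub : ∀ P Q : MvPolynomial (Fin n) ℝ, L (P - Q) = L P - L Q := fun P Q => map_sub F P Q
  -- degree facts
  have hdegp : ∀ i, (p i).totalDegree ≤ 1 := by
    intro i
    refine (totalDegree_finset_sum _ _).trans ?_
    simp only [Finset.sup_le_iff]
    intro j _
    refine (totalDegree_mul _ _).trans ?_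
    simp [totalDegree_X]
  have hdegs : s.totalDegree ≤ 2 := by
    refine (totalDegree_finset_sum _ _).trans ?_
    simp only [Finset.sup_le_iff]
    intro j _
    refine (totalDegree_pow _ _).trans ?_
    simp [totalDegree_X]
  have hdegs1 : (s - 1).totalDegree ≤ 2 := by
    rw [sub_eq_add_neg]
    refine (totalDegree_add _ _).trans ?_
    simp only [totalDegree_neg, sup_le_iff]
    exact ⟨hdegs, by simp [totalDegree_one]⟩
  -- SOS positivity helper
  have hsos : ∀ (r : Fin n → MvPolynomial (Fin n) ℝ),
      (∀ l, ((r l) ^ 2).totalDegree ≤ 2 * (1 + k)) → 0 ≤ L (∑ l, (r l) ^ 2) := by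
    intro r hr
    rw [hLsum]
    exact Finset.sum_nonneg fun l _ => hpos _ (hr l)
  -- L s = 1
  have hLs : L s = 1 := by
    have h0 : L ((s - 1) * 1) = 0 := by
      refine hconstr 1 ?_
      rw [mul_one]
      exact hdegs1.trans (by omega)
    rw [mul_one] at h0
    have := hLsub s 1
    rw [h0, hone] at this
    linarith
  -- constraint step : L (q * s) = L q for low-degree q
  have hqs : ∀ q : MvPolynomial (Fin n) ℝ, q.totalDegree ≤ 2 * k → L (q * s) = L q := by
    intro q hq
    have h0 : L ((s - 1) * q) = 0 := by
      refine hconstr q ?_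
      refine (totalDegree_mul _ _).trans ?_
      omega
    have hEq : q * s = (s - 1) * q + q := by ring
    rw [hEq, hadd, h0, zero_add]
  -- SOS decomposition of s - (p i)^2
  have hsosB : ∀ i, ∃ r : Fin n → MvPolynomial (Fin n) ℝ,
      (∀ l, (r l).totalDegree ≤ 1) ∧ s - (p i) ^ 2 = ∑ l, (r l) ^ 2 := by
    intro i
    set N : Matrix (Fin n) (Fin n) ℝ :=
      Matrix.of fun j j' => (if j = j' then (1:ℝ) else 0) - a i j * a i j' with hN_def
    have hNpsd : N.PosSemidef := by
      refine Matrix.PosSemidef.of_dotProduct_mulVec_nonneg ?_ ?_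
      · ext j j'
        simp only [Matrix.conjTranspose_apply, hN_def, Matrix.of_apply, star_trivial]
        rw [mul_comm (a i j') (a i j)]
        congr 1
        simp [eq_comm]
      · intro x
        rw [dot_quad]
        have hsplit : ∀ j j', x j * (N j j' * x j')
            = x j * ((if j = j' then (1:ℝ) else 0) * x j') - x j * ((a i j * a i j') * x j') := by
          intro j j'; simp only [hN_def, Matrix.of_apply]; ring
        simp only [hsplit, Finset.sum_sub_distrib]
        have hg : ∑ j, ∑ j', x j * ((a i j * a i j') * x j')
            = (∑ j, a i j * x j) ^ 2 := by
          have := scalar_gram (fun _ : Fin 1 => a i) x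
          simpa using this
        rw [scalar_diag, hg]
        have hcs := Finset.sum_mul_sq_le_sq_mul_sq Finset.univ (a i) x
        rw [hunit i, one_mul] at hcs
        linarith
    obtain ⟨r, hr1, hr2⟩ := quad_sos N hNpsd
    refine ⟨r, hr1, ?_⟩
    rw [← hr2]
    have hexp : (∑ j, ∑ j', C (N j j') * (X j * X j') : MvPolynomial (Fin n) ℝ)
        = (∑ j, ∑ j', C (if j = j' then (1:ℝ) else 0) * (X j * X j'))
          - ∑ j, ∑ j', C (a i j * a i j') * (X j * X j') := by
      rw [← Finset.sum_sub_distrib]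
      refine Finset.sum_congr rfl fun j _ => ?_
      rw [← Finset.sum_sub_distrib]
      refine Finset.sum_congr rfl fun j' _ => ?_
      simp only [hN_def, Matrix.of_apply, map_sub]
      ring
    rw [hexp, diag_expand, ← expand_sq]
    simp [hs_def, hp_def]
  -- w i ≤ v i
  have hwv : ∀ i, L ((p i) ^ (2 * (1 + k))) ≤ L ((p i) ^ 2) := by
    intro i
    obtain ⟨r, hr1, hr2⟩ := hsosB i
    have key : ∀ j : ℕ, j ≤ k → L ((p i) ^ (2 * j + 2)) ≤ L ((p i) ^ 2) := by
      intro j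
      induction j with
      | zero => intro _; norm_num
      | succ j ih =>
        intro hjk
        have hjk' : j ≤ k := by omega
        have step1 : L ((p i) ^ (2 * (j + 1) + 2)) ≤ L ((p i) ^ (2 * (j + 1)) * s) := by
          have hdiff : (p i) ^ (2 * (j + 1)) * s - (p i) ^ (2 * (j + 1) + 2)
              = ∑ l, ((p i) ^ (j + 1) * r l) ^ 2 := by
            have : (p i) ^ (2 * (j + 1)) * s - (p i) ^ (2 * (j + 1) + 2)
                = (p i) ^ (2 * (j + 1)) * (s - (p i) ^ 2) := by ring
            rw [this, hr2, Finset.mul_sum]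
            exact Finset.sum_congr rfl fun l _ => by ring
          have hnn : 0 ≤ L ((p i) ^ (2 * (j + 1)) * s - (p i) ^ (2 * (j + 1) + 2)) := by
            rw [hdiff]
            refine hsos _ fun l => ?_
            refine (totalDegree_pow _ _).trans ?_
            have h1 : ((p i) ^ (j + 1) * r l).totalDegree ≤ (j + 1) + 1 := by
              refine (totalDegree_mul _ _).trans ?_
              have := (totalDegree_pow (p i) (j + 1)).trans
                (Nat.mul_le_mul_left (j + 1) (hdegp i))
              have := hr1 l
              omega
            omega
          rw [hLsub] at hnn
          linarith
        have step2 : L ((p i) ^ (2 * (j + 1)) * s) = L ((p i) ^ (2 * (j + 1))) := by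
          refine hqs _ ?_
          refine (totalDegree_pow _ _).trans ?_
          have := hdegp i
          have : (p i).totalDegree ≤ 1 := this
          calc 2 * (j + 1) * (p i).totalDegree ≤ 2 * (j + 1) * 1 :=
            Nat.mul_le_mul_left _ this
            _ ≤ 2 * k := by omega
        have step3 : L ((p i) ^ (2 * (j + 1))) ≤ L ((p i) ^ 2) := by
          have h2j : 2 * (j + 1) = 2 * j + 2 := by ring
          rw [h2j]
          exact ih hjk'
        calc L ((p i) ^ (2 * (j + 1) + 2)) ≤ L ((p i) ^ (2 * (j + 1)) * s) := step1
          _ = L ((p i) ^ (2 * (j + 1))) := step2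
          _ ≤ L ((p i) ^ 2) := step3
    have h2k : 2 * (1 + k) = 2 * k + 2 := by ring
    rw [h2k]
    exact key k le_rfl
  -- nonnegativity of v i and w i
  have hv0 : ∀ i, 0 ≤ L ((p i) ^ 2) := by
    intro i
    refine hpos _ ?_
    refine (totalDegree_pow _ _).trans ?_
    have := hdegp i
    omega
  -- sum bound : ∑ v i ≤ σ
  have hsumv : ∑ i, L ((p i) ^ 2) ≤ σ := by
    set Mσ : Matrix (Fin n) (Fin n) ℝ :=
      Matrix.of fun j j' => (if j = j' then σ else 0) - ∑ i, a i j * a i j' with hM_def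
    have hMpsd : Mσ.PosSemidef := by
      refine Matrix.PosSemidef.of_dotProduct_mulVec_nonneg ?_ ?_
      · ext j j'
        simp only [Matrix.conjTranspose_apply, hM_def, Matrix.of_apply, star_trivial]
        have : ∑ i, a i j' * a i j = ∑ i, a i j * a i j' :=
          Finset.sum_congr rfl fun i _ => mul_comm _ _
        rw [this]
        congr 1
        simp [eq_comm]
      · intro x
        rw [dot_quad]
        have hsplit : ∀ j j', x j * (Mσ j j' * x j')
            = x j * ((if j = j' then σ else 0) * x j')
              - x j * ((∑ i, a i j * a i j') * x j') := by
          intro j j'; simp only [hM_def, Matrix.of_apply]; ring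
        simp only [hsplit, Finset.sum_sub_distrib]
        rw [scalar_diag, scalar_gram]
        have := hdict x
        linarith
    obtain ⟨r, hr1, hr2⟩ := quad_sos Mσ hMpsd
    have hexp : (∑ j, ∑ j', C (Mσ j j') * (X j * X j') : MvPolynomial (Fin n) ℝ)
        = C σ * s - ∑ i, (p i) ^ 2 := by
      have h1 : (∑ j, ∑ j', C (Mσ j j') * (X j * X j') : MvPolynomial (Fin n) ℝ)
          = (∑ j, ∑ j', C (if j = j' then σ else 0) * (X j * X j'))
            - ∑ j, ∑ j', C (∑ i, a i j * a i j') * (X j * X j') := by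
        rw [← Finset.sum_sub_distrib]
        refine Finset.sum_congr rfl fun j _ => ?_
        rw [← Finset.sum_sub_distrib]
        refine Finset.sum_congr rfl fun j' _ => ?_
        simp only [hM_def, Matrix.of_apply, map_sub]
        ring
      rw [h1, diag_expand, sum_sq_poly]
    have hnn : 0 ≤ L (C σ * s - ∑ i, (p i) ^ 2) := by
      rw [← hexp, hr2]
      refine hsos _ fun l => ?_
      refine (totalDegree_pow _ _).trans ?_
      have := hr1 l
      omega
    rw [hLsub] at hnn
    have hCσ : L (C σ * s) = σ := by
      rw [← smul_eq_C_mul, hsmul, hLs, mul_one]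
    rw [hCσ, hLsum] at hnn
    linarith
  -- the counting argument
  by_contra hcon
  push_neg at hcon
  set β : ℝ := Real.exp (-(2 * ↑k * ε)) with hβ_def
  have hβpos : 0 < β := Real.exp_pos _
  have hβ1 : β ≤ 1 := by
    rw [hβ_def]
    refine Real.exp_le_one_iff.mpr ?_
    have : (0:ℝ) ≤ 2 * ↑k * ε := by positivity
    linarith
  have hβeq : Real.exp (-(2 * ε * ↑k)) = β := by rw [hβ_def]; ring_nf
  have hper : ∀ i : Fin m, L ((p i) ^ (2 * (1 + k))) < β * L ((p i) ^ 2) + ε * β / m := by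
    intro i
    have hc := hcon i
    rw [hβeq] at hc
    by_cases hca : β * L ((p i) ^ 2) ≤ L ((p i) ^ (2 * (1 + k)))
    · have hvlt : L ((p i) ^ 2) < ε * β / m := hc hca
      have : L ((p i) ^ (2 * (1 + k))) ≤ L ((p i) ^ 2) := hwv i
      have hβv : 0 ≤ β * L ((p i) ^ 2) := mul_nonneg hβpos.le (hv0 i)
      linarith
    · push_neg at hca
      have hεβm : 0 < ε * β / m := by positivity
      linarith
  have hsumw : L (∑ i, (p i) ^ (2 * (1 + k))) = ∑ i, L ((p i) ^ (2 * (1 + k))) :=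
    hLsum _ _
  have hne : (Finset.univ : Finset (Fin m)).Nonempty := by
    have : Nonempty (Fin m) := Fin.pos_iff_nonempty.mp hm
    exact Finset.univ_nonempty
  have htot : ∑ i, L ((p i) ^ (2 * (1 + k)))
      < ∑ i, (β * L ((p i) ^ 2) + ε * β / m) :=
    Finset.sum_lt_sum_of_nonempty hne fun i _ => hper i
  have hrhs : ∑ i : Fin m, (β * L ((p i) ^ 2) + ε * β / m)
      = β * (∑ i, L ((p i) ^ 2)) + ε * β := by
    rw [Finset.sum_add_distrib, ← Finset.mul_sum, Finset.sum_const, Finset.card_univ,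
      Fintype.card_fin, nsmul_eq_mul]
    congr 1
    field_simp
  have h1 : β * (∑ i, L ((p i) ^ 2)) ≤ β * σ :=
    mul_le_mul_of_nonneg_left hsumv hβpos.le
  have h2 : ε * β ≤ ε * β * σ := le_mul_of_one_le_right (by positivity) hσ
  have hfin : L (∑ i, (p i) ^ (2 * (1 + k))) < (1 + ε) * β * σ := by
    rw [hsumw]
    calc ∑ i, L ((p i) ^ (2 * (1 + k)))
        < β * (∑ i, L ((p i) ^ 2)) + ε * β := by rw [← hrhs]; exact htot
      _ ≤ β * σ + ε * β * σ := by linarith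
      _ = (1 + ε) * β * σ := by ring
  rw [hβ_def] at hfin
  exact absurd hbig (by simp only [hp_def] at hfin; linarith)
end

section
/- Let A be a σ-dictionary with columns a¹,…,a^m ∈ ℝⁿ, let τ ∈ (0,1), and let μ be a probability measure on ℝ^m with finite moments of degree 4 such that: E_μ x_i⁴ = 1 for every i; 0 ≤ E_μ x_i² x_j² ≤ τ for every pair i ≠ j; and E_μ x^α = 0 for every non-square monomial x^α of degree 4. Then for every fixed i ∈ {1,…,m} and every u ∈ ℝⁿ: ⟨aⁱ,u⟩² ≤ E_μ[x_i²·⟨Ax,u⟩²] ≤ ⟨aⁱ,u⟩² + τ·σ·‖u‖₂². -/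
open MeasureTheory

private def expα {m : ℕ} (i l l' : Fin m) : Fin m → ℕ :=
  fun k => (if k = i then 2 else 0) + ((if k = l then 1 else 0) + (if k = l' then 1 else 0))

private lemma expα_prod {m : ℕ} (i l l' : Fin m) (x : Fin m → ℝ) :
    (∏ k, x k ^ expα i l l' k) = x i ^ 2 * (x l * x l') := by
  simp only [expα, pow_add, Finset.prod_mul_distrib, pow_ite, pow_zero, pow_one,
    Finset.prod_ite_eq', Finset.mem_univ, if_true]

private lemma expα_sum {m : ℕ} (i l l' : Fin m) :
    (∑ k, expα i l l' k) = 4 := by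
  simp [expα, Finset.sum_add_distrib, Finset.sum_ite_eq']


/-- For a `σ`-dictionary `A` with columns `a 1, …, a m` and a probability measure `μ` on
`ℝ^m` with `E x_i⁴ = 1`, `0 ≤ E x_i² x_j² ≤ τ` for `i ≠ j`, and vanishing non-square
moments of degree 4, we have
`⟨aⁱ,u⟩² ≤ E[x_i² ⟨Ax,u⟩²] ≤ ⟨aⁱ,u⟩² + τ σ ‖u‖₂²` for every `i` and every `u ∈ ℝⁿ`. -/
theorem stmt19 (n m : ℕ) (σ : ℝ) (hσ : 1 ≤ σ)
    (a : Fin m → Fin n → ℝ)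
    (hunit : ∀ i, ∑ j, a i j ^ 2 = 1)
    (hdict : ∀ u : Fin n → ℝ, ∑ i, (∑ j, a i j * u j) ^ 2 ≤ σ * ∑ j, u j ^ 2)
    (τ : ℝ) (hτ0 : 0 < τ) (hτ1 : τ < 1)
    (μ : Measure (Fin m → ℝ)) [IsProbabilityMeasure μ]
    (hint : ∀ α : Fin m → ℕ, (∑ k, α k) ≤ 4 →
      Integrable (fun x => ∏ k, x k ^ α k) μ)
    (hmom1 : ∀ i, ∫ x, x i ^ 4 ∂μ = 1)
    (hmom2 : ∀ i j, i ≠ j →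
      0 ≤ (∫ x, x i ^ 2 * x j ^ 2 ∂μ) ∧ (∫ x, x i ^ 2 * x j ^ 2 ∂μ) ≤ τ)
    (hmom3 : ∀ α : Fin m → ℕ, (∑ k, α k) = 4 → (∃ k, ¬ Even (α k)) →
      ∫ x, ∏ k, x k ^ α k ∂μ = 0)
    (i : Fin m) (u : Fin n → ℝ) :
    (∑ j, a i j * u j) ^ 2 ≤
        (∫ x, x i ^ 2 * (∑ l, x l * (∑ j, a l j * u j)) ^ 2 ∂μ) ∧
      (∫ x, x i ^ 2 * (∑ l, x l * (∑ j, a l j * u j)) ^ 2 ∂μ) ≤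
        (∑ j, a i j * u j) ^ 2 + τ * σ * ∑ j, u j ^ 2 := by
  set c : Fin m → ℝ := fun l => ∑ j, a l j * u j with hc
  -- integrability of each monomial
  have hI : ∀ l l' : Fin m, Integrable (fun x : Fin m → ℝ => x i ^ 2 * (x l * x l')) μ := by
    intro l l'
    have h := hint (expα i l l') (by rw [expα_sum])
    refine h.congr (Filter.Eventually.of_forall fun x => ?_)
    exact expα_prod i l l' x
  -- integral values
  have hval0 : ∀ l l' : Fin m, l ≠ l' →
      ∫ x, x i ^ 2 * (x l * x l') ∂μ = 0 := by
    intro l l' hll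
    have h := hmom3 (expα i l l') (expα_sum i l l') ?_
    · rw [← h]
      exact integral_congr_ae (Filter.Eventually.of_forall fun x => (expα_prod i l l' x).symm)
    · refine ⟨l, ?_⟩
      simp only [expα, if_pos rfl, if_neg hll]
      by_cases hli : l = i <;> simp [hli, Nat.even_add_one, parity_simps]
  -- the main expansion
  have hexp : (∫ x, x i ^ 2 * (∑ l, x l * c l) ^ 2 ∂μ)
      = ∑ l, c l ^ 2 * ∫ x, x i ^ 2 * (x l * x l) ∂μ := by
    have hptwise : ∀ x : Fin m → ℝ,
        x i ^ 2 * (∑ l, x l * c l) ^ 2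
          = ∑ l, ∑ l', (c l * c l') * (x i ^ 2 * (x l * x l')) := by
      intro x
      rw [sq (∑ l, x l * c l), Finset.sum_mul_sum, Finset.mul_sum]
      refine Finset.sum_congr rfl fun l _ => ?_
      rw [Finset.mul_sum]
      refine Finset.sum_congr rfl fun l' _ => ?_
      ring
    calc (∫ x, x i ^ 2 * (∑ l, x l * c l) ^ 2 ∂μ)
        = ∫ x, ∑ l, ∑ l', (c l * c l') * (x i ^ 2 * (x l * x l')) ∂μ :=
          integral_congr_ae (Filter.Eventually.of_forall fun x => hptwise x)
      _ = ∑ l, ∫ x, ∑ l', (c l * c l') * (x i ^ 2 * (x l * x l')) ∂μ := by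
          refine integral_finset_sum _ fun l _ => ?_
          exact integrable_finset_sum _ fun l' _ => (hI l l').const_mul _
      _ = ∑ l, ∑ l', ∫ x, (c l * c l') * (x i ^ 2 * (x l * x l')) ∂μ := by
          refine Finset.sum_congr rfl fun l _ => ?_
          exact integral_finset_sum _ fun l' _ => (hI l l').const_mul _
      _ = ∑ l, ∑ l', (c l * c l') * ∫ x, x i ^ 2 * (x l * x l') ∂μ := by
          refine Finset.sum_congr rfl fun l _ => Finset.sum_congr rfl fun l' _ => ?_
          exact integral_const_mul _ _
      _ = ∑ l, c l ^ 2 * ∫ x, x i ^ 2 * (x l * x l) ∂μ := by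
          refine Finset.sum_congr rfl fun l _ => ?_
          rw [Finset.sum_eq_single l]
          · ring_nf
          · intro l' _ hll'
            rw [hval0 l l' (Ne.symm hll'), mul_zero]
          · simp
  -- the diagonal integrals
  have hEi : (∫ x, x i ^ 2 * (x i * x i) ∂μ) = 1 := by
    rw [← hmom1 i]
    refine integral_congr_ae (Filter.Eventually.of_forall fun x => ?_)
    ring
  have hEl : ∀ l : Fin m, l ≠ i → 0 ≤ (∫ x, x i ^ 2 * (x l * x l) ∂μ) ∧
      (∫ x, x i ^ 2 * (x l * x l) ∂μ) ≤ τ := by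
    intro l hl
    have h := hmom2 i l (Ne.symm hl)
    have heq : (∫ x, x i ^ 2 * (x l * x l) ∂μ) = ∫ x, x i ^ 2 * x l ^ 2 ∂μ := by
      refine integral_congr_ae (Filter.Eventually.of_forall fun x => ?_)
      ring
    rw [heq]; exact h
  have hEnn : ∀ l : Fin m, 0 ≤ (∫ x, x i ^ 2 * (x l * x l) ∂μ) := by
    intro l
    by_cases hl : l = i
    · rw [hl, hEi]; norm_num
    · exact (hEl l hl).1
  constructor
  · rw [hexp]
    have h1 : c i ^ 2 * (∫ x, x i ^ 2 * (x i * x i) ∂μ)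
        ≤ ∑ l, c l ^ 2 * ∫ x, x i ^ 2 * (x l * x l) ∂μ :=
      Finset.single_le_sum (f := fun l => c l ^ 2 * ∫ x, x i ^ 2 * (x l * x l) ∂μ)
        (fun l _ => mul_nonneg (sq_nonneg _) (hEnn l)) (Finset.mem_univ i)
    rwa [hEi, mul_one] at h1
  · rw [hexp, ← Finset.add_sum_erase _ _ (Finset.mem_univ i), hEi, mul_one]
    refine add_le_add (le_refl _) ?_
    calc ∑ l ∈ Finset.univ.erase i, c l ^ 2 * ∫ x, x i ^ 2 * (x l * x l) ∂μ
        ≤ ∑ l ∈ Finset.univ.erase i, c l ^ 2 * τ :=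
          Finset.sum_le_sum fun l hl =>
            mul_le_mul_of_nonneg_left (hEl l (Finset.ne_of_mem_erase hl)).2 (sq_nonneg _)
      _ = τ * ∑ l ∈ Finset.univ.erase i, c l ^ 2 := by
          rw [← Finset.sum_mul, mul_comm]
      _ ≤ τ * ∑ l, c l ^ 2 := by
          refine mul_le_mul_of_nonneg_left ?_ hτ0.le
          exact Finset.sum_le_sum_of_subset_of_nonneg (Finset.subset_univ _)
            fun l _ _ => sq_nonneg _
      _ ≤ τ * (σ * ∑ j, u j ^ 2) :=
          mul_le_mul_of_nonneg_left (hdict u) hτ0.le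
      _ = τ * σ * ∑ j, u j ^ 2 := by ring
end
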